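/- arXiv:1412.3313 — 4 statements merged into one kernel-verified Lean document; each statement's English description precedes it below -/
import Mathlib

section
/- Let K be an abstract class, κ an infinite cardinal, and K̂ any (<κ)-ary functorial expansion of K with vocabulary τ̂. Let N₁, N₂ ∈ K, A ⊆ |N₁| ∩ |N₂|, and let b̄_ℓ be a sequence from N_ℓ for ℓ = 1,2. If gtp(b̄₁/A;N₁) = gtp(b̄₂/A;N₂), then tp_{qf-L_{κ,κ}(τ̂)}(b̄₁/A;N̂₁) = tp_{qf-L_{κ,κ}(τ̂)}(b̄₂/A;N̂₂). -/
/-!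
Self-contained formalization background for "Infinitary stability theory" (Vasey):
infinitary (relational) vocabularies, structures, abstract classes, Galois types,
Galois Morleyization, quantifier-free `L_{κ,κ}` formulas and types, etc.
-/

universe u

namespace GM

open Cardinal

/-- An infinitary (relational) vocabulary: a type of relation symbols together with
an arity (an index type for the arguments) for each symbol. -/
structure Lang : Type (u + 1) where
  Rel : Type u
  arity : Rel → Type u

/-- A `L`-structure whose universe is a subset of the ambient type `Ω`.
Relations only hold on tuples from the carrier. -/
structure Struc (L : Lang.{u}) (Ω : Type u) : Type u where
  carrier : Set Ω
  rel : ∀ r : L.Rel, (L.arity r → Ω) → Prop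
  rel_dom : ∀ r v, rel r v → ∀ i, v i ∈ carrier

variable {L : Lang.{u}} {Ω : Type u}

/-- `M` is a substructure of `N` (written `M ⊆ N` in the paper). -/
def Substruc (M N : Struc L Ω) : Prop :=
  M.carrier ⊆ N.carrier ∧
    ∀ (r : L.Rel) (v : L.arity r → Ω), (∀ i, v i ∈ M.carrier) → (M.rel r v ↔ N.rel r v)

/-- `f` is an isomorphism from `M` onto `N`. -/
def IsIsoOn (M N : Struc L Ω) (f : Ω → Ω) : Prop :=
  Set.InjOn f M.carrier ∧ f '' M.carrier = N.carrier ∧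
    ∀ (r : L.Rel) (v : L.arity r → Ω), (∀ i, v i ∈ M.carrier) →
      (M.rel r v ↔ N.rel r (f ∘ v))

/-- The data of a class of structures together with a binary relation on them. -/
structure PreClass (L : Lang.{u}) (Ω : Type u) : Type u where
  K : Set (Struc L Ω)
  le : Struc L Ω → Struc L Ω → Prop

/-- An abstract class: a class of `τ`-structures with a partial order `≤` refining `⊆`,
both closed under isomorphism. -/
structure AbstractClass (L : Lang.{u}) (Ω : Type u) extends PreClass L Ω : Type u where
  le_refl : ∀ M ∈ K, le M M
  le_antisymm : ∀ {M N}, le M N → le N M → M = N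
  le_trans : ∀ {M N P}, le M N → le N P → le M P
  le_mem_left : ∀ {M N}, le M N → M ∈ K
  le_mem_right : ∀ {M N}, le M N → N ∈ K
  le_sub : ∀ {M N}, le M N → Substruc M N
  iso_closed : ∀ {M N N' : Struc L Ω} {f : Ω → Ω}, le M N → IsIsoOn N N' f →
    N' ∈ K ∧ ∃ M', IsIsoOn M M' f ∧ le M' N'

/-- `f` is a `K`-embedding of `M` into `N`. -/
def IsEmb (C : PreClass L Ω) (M N : Struc L Ω) (f : Ω → Ω) : Prop :=
  M ∈ C.K ∧ N ∈ C.K ∧ ∃ M', IsIsoOn M M' f ∧ C.le M' N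

/-- A triple `(b̄, A, N)` as in the definition of Galois types: `N ∈ K`,
`A ⊆ |N|` and `b̄` a `β`-indexed sequence of elements of `N`. -/
structure GTriple (C : PreClass L Ω) (β : Type u) (A : Set Ω) : Type u where
  N : Struc L Ω
  hN : N ∈ C.K
  hA : A ⊆ N.carrier
  seq : β → Ω
  hseq : ∀ i, seq i ∈ N.carrier

/-- The relation `E_at`: the two triples can be amalgamated over `A`. -/
def Eat (C : PreClass L Ω) {β : Type u} {A : Set Ω} (t₁ t₂ : GTriple C β A) : Prop :=
  ∃ (N : Struc L Ω) (f₁ f₂ : Ω → Ω),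
    IsEmb C t₁.N N f₁ ∧ IsEmb C t₂.N N f₂ ∧
    (∀ a ∈ A, f₁ a = a) ∧ (∀ a ∈ A, f₂ a = a) ∧
    ∀ i, f₁ (t₁.seq i) = f₂ (t₂.seq i)

/-- `E`, the transitive (here: equivalence) closure of `E_at`. -/
instance gsetoid (C : PreClass L Ω) (β : Type u) (A : Set Ω) : Setoid (GTriple C β A) :=
  ⟨Relation.EqvGen (Eat C), Relation.EqvGen.is_equivalence _⟩

/-- Galois types: `E`-equivalence classes of triples. -/
def GType (C : PreClass L Ω) (β : Type u) (A : Set Ω) : Type u :=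
  Quotient (gsetoid C β A)

/-- The Galois type of a triple. -/
def gtp (C : PreClass L Ω) {β : Type u} {A : Set Ω} (t : GTriple C β A) : GType C β A :=
  Quotient.mk _ t

/-- `gtp(b̄ / A; N)`. -/
def gtpOf (C : PreClass L Ω) {β : Type u} (N : Struc L Ω) (b : β → Ω) (A : Set Ω)
    (hN : N ∈ C.K) (hA : A ⊆ N.carrier) (hb : ∀ i, b i ∈ N.carrier) : GType C β A :=
  gtp C ⟨N, hN, hA, b, hb⟩

/-- Restriction of a triple to a smaller domain. -/
def GTriple.restrDom {C : PreClass L Ω} {β : Type u} {A : Set Ω} (t : GTriple C β A)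
    (A₀ : Set Ω) (h : A₀ ⊆ A) : GTriple C β A₀ :=
  ⟨t.N, t.hN, h.trans t.hA, t.seq, t.hseq⟩

/-- Restriction of a triple to a subsequence. -/
def GTriple.restrLen {C : PreClass L Ω} {β : Type u} {A : Set Ω} (t : GTriple C β A)
    (I : Set β) : GTriple C I A :=
  ⟨t.N, t.hN, t.hA, fun i => t.seq i, fun i => t.hseq i⟩

/-- `p ↾ A₀`: restriction of a Galois type to a smaller domain. -/
def GType.restrDom {C : PreClass L Ω} {β : Type u} {A : Set Ω} (p : GType C β A)
    (A₀ : Set Ω) (h : A₀ ⊆ A) : GType C β A₀ :=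
  Quotient.map (fun t => t.restrDom A₀ h)
    (fun t₁ t₂ he => by
      induction he with
      | rel x y hxy =>
        refine Relation.EqvGen.rel _ _ ?_
        obtain ⟨N, f₁, f₂, h₁, h₂, e₁, e₂, e⟩ := hxy
        exact ⟨N, f₁, f₂, h₁, h₂, fun a ha => e₁ a (h ha), fun a ha => e₂ a (h ha), e⟩
      | refl x => exact Relation.EqvGen.refl _
      | symm x y _ ih => exact Relation.EqvGen.symm _ _ ih
      | trans x y z _ _ ih₁ ih₂ => exact Relation.EqvGen.trans _ _ _ ih₁ ih₂) p

/-- `p^I`: restriction of a Galois type to a subsequence. -/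
def GType.restrLen {C : PreClass L Ω} {β : Type u} {A : Set Ω} (p : GType C β A)
    (I : Set β) : GType C I A :=
  Quotient.map (fun t => t.restrLen I)
    (fun t₁ t₂ he => by
      induction he with
      | rel x y hxy =>
        refine Relation.EqvGen.rel _ _ ?_
        obtain ⟨N, f₁, f₂, h₁, h₂, e₁, e₂, e⟩ := hxy
        exact ⟨N, f₁, f₂, h₁, h₂, e₁, e₂, fun i => e i⟩
      | refl x => exact Relation.EqvGen.refl _
      | symm x y _ ih => exact Relation.EqvGen.symm _ _ ih
      | trans x y z _ _ ih₁ ih₂ => exact Relation.EqvGen.trans _ _ _ ih₁ ih₂) p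

/-- `gS^β(A; N)`: the Galois types over `A` of `β`-indexed sequences from `N`. -/
def gtypesRealized (C : PreClass L Ω) (β : Type u) (A : Set Ω) (N : Struc L Ω) :
    Set (GType C β A) :=
  { p | ∃ (hN : N ∈ C.K) (hA : A ⊆ N.carrier) (b : β → Ω) (hb : ∀ i, b i ∈ N.carrier),
      gtpOf C N b A hN hA hb = p }

/-- `gS^β(M)`: Galois types over the model `M`, realized in some `≤`-extension of `M`. -/
def gS (C : PreClass L Ω) (β : Type u) (M : Struc L Ω) : Set (GType C β M.carrier) :=
  { p | ∃ N, C.le M N ∧ p ∈ gtypesRealized C β M.carrier N }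

/-- The canonical index type of size `c`. -/
def outType (c : Cardinal.{u}) : Type u := Quotient.out c

/-- The vocabulary of the `(<κ)`-Galois Morleyization: add one relation symbol `R_p`
of arity `ℓ(p)` for each Galois type `p` over `∅` of length `< κ` (lengths being
represented by the initial segments of `κ.ord.ToType`). -/
noncomputable def MorLang (C : PreClass L Ω) (κ : Cardinal.{u}) : Lang.{u} where
  Rel := L.Rel ⊕ Σ o : κ.ord.ToType, GType C (Set.Iio o) (∅ : Set Ω)
  arity := Sum.elim L.arity fun x => ↥(Set.Iio x.1)

/-- The `(<κ)`-Galois Morleyization `N̂` of `N ∈ K`: interpret `R_p(ā)` as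
`gtp(ā / ∅; N) = p`. -/
noncomputable def Mor (C : PreClass L Ω) (κ : Cardinal.{u}) (N : Struc L Ω) :
    Struc (MorLang C κ) Ω where
  carrier := N.carrier
  rel := fun r => match r with
    | Sum.inl r₀ => fun v => N.rel r₀ v
    | Sum.inr x => fun v => ∃ (hN : N ∈ C.K) (hv : ∀ i, v i ∈ N.carrier),
        gtpOf C N v ∅ hN (Set.empty_subset _) hv = x.2
  rel_dom := by
    rintro (r₀ | x) v hv i
    · exact N.rel_dom r₀ v hv i
    · obtain ⟨_, h, _⟩ := hv
      exact h i

/-- The Galois Morleyization of the class `K`, as a class of structures in the expanded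
vocabulary, with the induced ordering. -/
noncomputable def MorPre (C : PreClass L Ω) (κ : Cardinal.{u}) : PreClass (MorLang C κ) Ω :=
  ⟨Mor C κ '' C.K, fun M' N' => ∃ M N, C.le M N ∧ M' = Mor C κ M ∧ N' = Mor C κ N⟩

/-- Quantifier-free `L_{κ,κ}` formulas over a vocabulary `L'`, with free variables
indexed by `α`: atomic formulas, negation, and conjunctions of `< κ` many formulas. -/
inductive QF (L' : Lang.{u}) (κ : Cardinal.{u}) (α : Type u) : Type u
  | equal (x y : α) : QF L' κ α
  | rel (r : L'.Rel) (v : L'.arity r → α) : QF L' κ α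
  | not (φ : QF L' κ α) : QF L' κ α
  | conj (o : κ.ord.ToType) (φs : Set.Iio o → QF L' κ α) : QF L' κ α

/-- Satisfaction of a quantifier-free formula in a structure under a valuation. -/
def QF.Sat {L' : Lang.{u}} {κ : Cardinal.{u}} {α : Type u} (M : Struc L' Ω) (v : α → Ω) :
    QF L' κ α → Prop
  | .equal x y => v x = v y
  | .rel r w => M.rel r (v ∘ w)
  | .not φ => ¬ QF.Sat M v φ
  | .conj _ φs => ∀ i, QF.Sat M v (φs i)

/-- Renaming of free variables. -/
def QF.map {L' : Lang.{u}} {κ : Cardinal.{u}} {α α' : Type u} (g : α → α') :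
    QF L' κ α → QF L' κ α'
  | .equal x y => .equal (g x) (g y)
  | .rel r v => .rel r (g ∘ v)
  | .not φ => .not (φ.map g)
  | .conj o φs => .conj o fun i => (φs i).map g

/-- `tp_{qf-L_{κ,κ}}(b̄ / A; M)`: the quantifier-free type of `b̄` over `A` in `M`.
A formula over `A` in the variables `b̄` is a `QF`-formula whose variables are
`β ⊕ ↥A`, the `↥A`-variables being interpreted by the parameters themselves. -/
def qftp {L' : Lang.{u}} (κ : Cardinal.{u}) (M : Struc L' Ω) {β : Type u} (b : β → Ω)
    (A : Set Ω) : Set (QF L' κ (β ⊕ ↥A)) :=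
  { φ | QF.Sat M (Sum.elim b Subtype.val) φ }

/-- `p ↦ p^s`: the quantifier-free syntactic type (in the Galois Morleyization)
corresponding to a Galois type, computed from a representative. -/
noncomputable def GType.syn {C : PreClass L Ω} (κ : Cardinal.{u}) {β : Type u} {A : Set Ω}
    (p : GType C β A) : Set (QF (MorLang C κ) κ (β ⊕ ↥A)) :=
  qftp κ (Mor C κ (Quotient.out p).N) (Quotient.out p).seq A

/-- `S^β_{qf-L_{κ,κ}}(M)`: quantifier-free syntactic types over `M` realized in
Galois Morleyizations of `≤`-extensions of `M`. -/
noncomputable def synS (C : PreClass L Ω) (κ : Cardinal.{u}) (β : Type u) (M : Struc L Ω) :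
    Set (Set (QF (MorLang C κ) κ (β ⊕ ↥M.carrier))) :=
  { t | ∃ N, C.le M N ∧ ∃ b : β → Ω, (∀ i, b i ∈ N.carrier) ∧
      t = qftp κ (Mor C κ N) b M.carrier }

/-- `K` is `(<κ)`-tame for the family `Γ` of Galois types. -/
def TameFor (C : PreClass L Ω) (κ : Cardinal.{u})
    (Γ : ∀ β : Type u, ∀ A : Set Ω, Set (GType C β A)) : Prop :=
  ∀ (β : Type u) (A : Set Ω), ∀ p ∈ Γ β A, ∀ q ∈ Γ β A, p ≠ q →
    ∃ (A₀ : Set Ω) (h : A₀ ⊆ A), #↥A₀ < κ ∧ p.restrDom A₀ h ≠ q.restrDom A₀ h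

/-- `K` is `(<κ)`-type short for the family `Γ` of Galois types. -/
def ShortFor (C : PreClass L Ω) (κ : Cardinal.{u})
    (Γ : ∀ β : Type u, ∀ A : Set Ω, Set (GType C β A)) : Prop :=
  ∀ (β : Type u) (A : Set Ω), ∀ p ∈ Γ β A, ∀ q ∈ Γ β A, p ≠ q →
    ∃ I : Set β, #↥I < κ ∧ p.restrLen I ≠ q.restrLen I

/-- `K` is fully `(<κ)`-tame and type short: distinct Galois types over models differ
on a restriction to a subsequence and subdomain both of size `< κ`. -/
def FullyTameShort (C : PreClass L Ω) (κ : Cardinal.{u}) : Prop :=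
  ∀ M ∈ C.K, ∀ β : Type u, ∀ p ∈ gS C β M, ∀ q ∈ gS C β M, p ≠ q →
    ∃ (I : Set β) (A₀ : Set Ω) (h : A₀ ⊆ M.carrier), #↥I < κ ∧ #↥A₀ < κ ∧
      (p.restrLen I).restrDom A₀ h ≠ (q.restrLen I).restrDom A₀ h

/-- `K` is `(<κ)`-tame (for Galois types of length one over models). -/
def TameOne (C : PreClass L Ω) (κ : Cardinal.{u}) : Prop :=
  ∀ M ∈ C.K, ∀ p ∈ gS C PUnit M, ∀ q ∈ gS C PUnit M, p ≠ q →
    ∃ (A₀ : Set Ω) (h : A₀ ⊆ M.carrier), #↥A₀ < κ ∧ p.restrDom A₀ h ≠ q.restrDom A₀ h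



open Cardinal
variable {L : Lang.{u}} {Ω : Type u}

/-- An extension of vocabularies: `L' ⊇ L`. -/
structure LangExt (L L' : Lang.{u}) : Type u where
  emb : L.Rel → L'.Rel
  inj : Function.Injective emb
  arity_eq : ∀ r, L'.arity (emb r) = L.arity r

/-- The reduct of an `L'`-structure to `L`. -/
def LangExt.reduct {L L' : Lang.{u}} (E : LangExt L L') (M : Struc L' Ω) : Struc L Ω where
  carrier := M.carrier
  rel := fun r v => M.rel (E.emb r) fun i => v (cast (E.arity_eq r) i)
  rel_dom := by
    intro r v h i
    have := M.rel_dom (E.emb r) _ h (cast (E.arity_eq r).symm i)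
    simpa using this

/-- A functorial expansion of the class `C` to the vocabulary `L'`. -/
structure FuncExp (C : PreClass L Ω) (L' : Lang.{u}) extends LangExt L L' : Type u where
  hat : Struc L Ω → Struc L' Ω
  carrier_hat : ∀ M, (hat M).carrier = M.carrier
  reduct_hat : ∀ M ∈ C.K, toLangExt.reduct (hat M) = M
  iso_hat : ∀ {M N : Struc L Ω} {f : Ω → Ω}, M ∈ C.K → N ∈ C.K → IsIsoOn M N f →
    IsIsoOn (hat M) (hat N) f
  sub_hat : ∀ {M N}, C.le M N → Substruc (hat M) (hat N)

/-- The expanded class `K̂ = hat '' K`, with the induced ordering. -/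
def FuncExp.pre {C : PreClass L Ω} {L' : Lang.{u}} (E : FuncExp C L') : PreClass L' Ω :=
  ⟨E.hat '' C.K, fun M' N' => ∃ M N, C.le M N ∧ M' = E.hat M ∧ N' = E.hat N⟩

/-- Transport of a Galois triple along a functorial expansion. -/
def FuncExp.hatT {C : PreClass L Ω} {L' : Lang.{u}} (E : FuncExp C L') {β : Type u}
    {A : Set Ω} (t : GTriple C β A) : GTriple E.pre β A :=
  ⟨E.hat t.N, ⟨t.N, t.hN, rfl⟩,
    by rw [E.carrier_hat]; exact t.hA, t.seq,
    by intro i; rw [E.carrier_hat]; exact t.hseq i⟩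

/-- The syntactic type `p^s` computed in an arbitrary functorial expansion. -/
noncomputable def GType.synE {C : PreClass L Ω} {L' : Lang.{u}} (E : FuncExp C L')
    (κ : Cardinal.{u}) {β : Type u} {A : Set Ω} (p : GType C β A) :
    Set (QF L' κ (β ⊕ ↥A)) :=
  qftp κ (E.hat (Quotient.out p).N) (Quotient.out p).seq A

/-- The union of an indexed system of structures. -/
def unionStruc {ι : Type u} (M : ι → Struc L Ω) : Struc L Ω where
  carrier := ⋃ i, (M i).carrier
  rel := fun r v => ∃ i, (∀ k, v k ∈ (M i).carrier) ∧ (M i).rel r v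
  rel_dom := by
    intro r v h k
    obtain ⟨i, hi, _⟩ := h
    exact Set.mem_iUnion.2 ⟨i, hi k⟩

/-- `lam` is a Löwenheim–Skolem–Tarski number for `C`. -/
def IsLSTNum (C : PreClass L Ω) (lam : Cardinal.{u}) : Prop :=
  #L.Rel + Cardinal.aleph0 ≤ lam ∧
    ∀ M ∈ C.K, ∀ A : Set Ω, A ⊆ M.carrier →
      ∃ M₀, C.le M₀ M ∧ A ⊆ M₀.carrier ∧ #↥M₀.carrier ≤ #↥A + lam

/-- An abstract elementary class. -/
structure AEC (L : Lang.{u}) (Ω : Type u) extends AbstractClass L Ω : Type u where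
  finitary : ∀ r : L.Rel, Finite (L.arity r)
  coherence : ∀ {M₀ M₁ M₂}, le M₀ M₂ → le M₁ M₂ → Substruc M₀ M₁ → le M₀ M₁
  tv_mem : ∀ {ι : Type u} [Preorder ι] [Nonempty ι] [IsDirected ι (· ≤ ·)]
    (M : ι → Struc L Ω), (∀ i j, i ≤ j → le (M i) (M j)) → unionStruc M ∈ K
  tv_ub : ∀ {ι : Type u} [Preorder ι] [Nonempty ι] [IsDirected ι (· ≤ ·)]
    (M : ι → Struc L Ω), (∀ i j, i ≤ j → le (M i) (M j)) → ∀ j, le (M j) (unionStruc M)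
  tv_lub : ∀ {ι : Type u} [Preorder ι] [Nonempty ι] [IsDirected ι (· ≤ ·)]
    (M : ι → Struc L Ω), (∀ i j, i ≤ j → le (M i) (M j)) →
    ∀ N, (∀ i, le (M i) N) → le (unionStruc M) N
  lst : ∃ lam, IsLSTNum toPreClass lam

/-- The Löwenheim–Skolem number of an AEC: the least LST number. -/
noncomputable def AEC.LS (A : AEC L Ω) : Cardinal.{u} :=
  sInf { lam | IsLSTNum A.toPreClass lam }

/-- `K` has amalgamation. -/
def Amalgamation (C : PreClass L Ω) : Prop :=
  ∀ M₀ M₁ M₂, C.le M₀ M₁ → C.le M₀ M₂ →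
    ∃ (N : Struc L Ω) (f₁ f₂ : Ω → Ω), IsEmb C M₁ N f₁ ∧ IsEmb C M₂ N f₂ ∧
      (∀ a ∈ M₀.carrier, f₁ a = a) ∧ (∀ a ∈ M₀.carrier, f₂ a = a)

theorem elim_mem {s : Set Ω} {β γ : Type u} {b : β → Ω} {c : γ → Ω}
    (hb : ∀ i, b i ∈ s) (hc : ∀ i, c i ∈ s) : ∀ k : β ⊕ γ, Sum.elim b c k ∈ s := by
  rintro (k | k)
  · exact hb k
  · exact hc k

/-- `N` has the Galois `α`-order property of length `μ`. -/
def GaloisOP (C : PreClass L Ω) (N : Struc L Ω) (hN : N ∈ C.K) (α μ : Cardinal.{u}) : Prop :=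
  ∃ (a : μ.ord.ToType → outType α → Ω) (ha : ∀ i k, a i k ∈ N.carrier),
    ∀ i₀ j₀ i₁ j₁, i₀ < j₀ → i₁ < j₁ →
      gtpOf C N (Sum.elim (a i₀) (a j₀)) ∅ hN (Set.empty_subset _)
          (elim_mem (ha i₀) (ha j₀)) ≠
        gtpOf C N (Sum.elim (a j₁) (a i₁)) ∅ hN (Set.empty_subset _)
          (elim_mem (ha j₁) (ha i₁))

/-- `K` has the Galois `α`-order property of length `μ`. -/
def GaloisOPIn (C : PreClass L Ω) (α μ : Cardinal.{u}) : Prop :=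
  ∃ (N : Struc L Ω) (hN : N ∈ C.K), GaloisOP C N hN α μ

/-- `K` has the Galois `α`-order property (of every length). -/
def GaloisOPAll (C : PreClass L Ω) (α : Cardinal.{u}) : Prop :=
  ∀ μ : Cardinal.{u}, GaloisOPIn C α μ

/-- `M'` has the syntactic `α`-order property of length `μ`, witnessed by a
quantifier-free `L_{κ,κ}` formula. -/
def SynOP {L' : Lang.{u}} (κ : Cardinal.{u}) (M' : Struc L' Ω) (α μ : Cardinal.{u}) : Prop :=
  ∃ (a : μ.ord.ToType → outType α → Ω) (φ : QF L' κ (outType α ⊕ outType α)),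
    (∀ i k, a i k ∈ M'.carrier) ∧
    ∀ i j, (QF.Sat M' (Sum.elim (a i) (a j)) φ ↔ i < j)

/-- `K` has the weak `κ`-order property. -/
def WeakOP (C : PreClass L Ω) (κ : Cardinal.{u}) : Prop :=
  ∃ (M N : Struc L Ω), C.le M N ∧ #↥M.carrier < κ ∧
    ∃ (γ δ : Type u), #γ < κ ∧ #δ < κ ∧
      ∃ (p q : GType C (γ ⊕ δ) M.carrier), p ≠ q ∧
        ∃ (hN : N ∈ C.K) (hA : M.carrier ⊆ N.carrier)
          (a : κ.ord.ToType → γ → Ω) (b : κ.ord.ToType → δ → Ω)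
          (ha : ∀ i k, a i k ∈ N.carrier) (hb : ∀ i k, b i k ∈ N.carrier),
          ∀ i j,
            (i ≤ j → gtpOf C N (Sum.elim (a i) (b j)) M.carrier hN hA
              (elim_mem (ha i) (hb j)) = p) ∧
            (j < i → gtpOf C N (Sum.elim (a i) (b j)) M.carrier hN hA
              (elim_mem (ha i) (hb j)) = q)

/-- `K` is Galois stable in `μ` (for types of length one). -/
def GaloisStableIn (C : PreClass L Ω) (μ : Cardinal.{u}) : Prop :=
  ∀ N ∈ C.K, ∀ A : Set Ω, A ⊆ N.carrier → #↥A ≤ μ →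
    #↥(gtypesRealized C PUnit A N) ≤ μ

/-- `K` is Galois stable in `μ` for types of length `β`. -/
def GaloisStableLenIn (C : PreClass L Ω) (β : Type u) (μ : Cardinal.{u}) : Prop :=
  ∀ N ∈ C.K, ∀ A : Set Ω, A ⊆ N.carrier → #↥A ≤ μ →
    #↥(gtypesRealized C β A N) ≤ μ

/-- `K` is `α`-stable in `μ` (for types of length `≤ α`). -/
def GaloisStableLe (C : PreClass L Ω) (α μ : Cardinal.{u}) : Prop :=
  ∀ β : Type u, #β ≤ α → GaloisStableLenIn C β μ

/-- The quantifier-free syntactic types over `A` of `β`-indexed sequences from `M'`. -/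
def synTypesRealized {L' : Lang.{u}} (κ : Cardinal.{u}) (M' : Struc L' Ω) (β : Type u)
    (A : Set Ω) : Set (Set (QF L' κ (β ⊕ ↥A))) :=
  { t | ∃ b : β → Ω, (∀ i, b i ∈ M'.carrier) ∧ t = qftp κ M' b A }

/-- The class `K'` is syntactically stable in `μ` for types of length `β`. -/
def SynStableLenIn {L' : Lang.{u}} (κ : Cardinal.{u}) (K' : Set (Struc L' Ω)) (β : Type u)
    (μ : Cardinal.{u}) : Prop :=
  ∀ M' ∈ K', ∀ A : Set Ω, A ⊆ M'.carrier → #↥A ≤ μ → #↥(synTypesRealized κ M' β A) ≤ μ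

/-- Syntactic `α`-stability (types of length `≤ α`) in `μ`. -/
def SynStableLe {L' : Lang.{u}} (κ : Cardinal.{u}) (K' : Set (Struc L' Ω))
    (α μ : Cardinal.{u}) : Prop :=
  ∀ β : Type u, #β ≤ α → SynStableLenIn κ K' β μ

/-- Syntactic `(<α)`-stability in `μ`. -/
def SynStableLt {L' : Lang.{u}} (κ : Cardinal.{u}) (K' : Set (Struc L' Ω))
    (α μ : Cardinal.{u}) : Prop :=
  ∀ β : Type u, #β < α → SynStableLenIn κ K' β μ

/-- The Hanf function `h(λ) = ℶ_{(2^λ)⁺}`. -/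
noncomputable def hanf (lam : Cardinal.{u}) : Cardinal.{u} :=
  Cardinal.beth (Order.succ ((2 : Cardinal.{u}) ^ lam)).ord

/-- `λ⁻`: `λ` if `λ` is a limit cardinal, the predecessor of `λ` if it is a successor. -/
noncomputable def cardPred (lam : Cardinal.{u}) : Cardinal.{u} :=
  sInf { c | lam ≤ Order.succ c }

/-- `h*(λ) = h(λ⁻)`. -/
noncomputable def hanfStar (lam : Cardinal.{u}) : Cardinal.{u} := hanf (cardPred lam)

/-- `κ_r`: the least regular cardinal `≥ κ`. -/
noncomputable def plusReg (κ : Cardinal.{u}) : Cardinal.{u} :=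
  sInf { c | κ ≤ c ∧ c.IsRegular }

/-- `M` is a `κ`-(Galois-)saturated member of `K`. -/
def Saturated (C : PreClass L Ω) (κ : Cardinal.{u}) (M : Struc L Ω) : Prop :=
  M ∈ C.K ∧ ∀ N, C.le M N → ∀ A : Set Ω, A ⊆ M.carrier → #↥A < κ →
    ∀ (β : Type u), #β < κ → ∀ b : β → Ω, (∀ i, b i ∈ N.carrier) →
      ∃ (hN : N ∈ C.K) (hAN : A ⊆ N.carrier) (hb : ∀ i, b i ∈ N.carrier)
        (b' : β → Ω) (hM : M ∈ C.K) (hAM : A ⊆ M.carrier) (hb' : ∀ i, b' i ∈ M.carrier),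
        gtpOf C M b' A hM hAM hb' = gtpOf C N b A hN hAN hb

/-- The class of `κ`-saturated models of `K`, with the ordering of `K`. -/
def Ksat (C : PreClass L Ω) (κ : Cardinal.{u}) : PreClass L Ω :=
  ⟨{ M | Saturated C κ M }, fun M N => Saturated C κ M ∧ Saturated C κ N ∧ C.le M N⟩

/-- The set of formulas `p` is a `(<κ)`-coheir over `A` in `M'`: every formula in `p`
is satisfied in `M'` by a tuple from `A`. -/
def IsCoheir {L' : Lang.{u}} (κ : Cardinal.{u}) (M' : Struc L' Ω) {γ : Type u} {B : Set Ω}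
    (p : Set (QF L' κ (γ ⊕ ↥B))) (A : Set Ω) : Prop :=
  ∀ φ ∈ p, ∃ a : γ → Ω, (∀ i, a i ∈ A) ∧ QF.Sat M' (Sum.elim a Subtype.val) φ

/-- The set of formulas `p` (a type over `B ⊇ A`) is a `(<κ)`-heir over `A`: every
formula `φ(x̄; b̄)` of `p` over `A` (with extra parameters `b̄` from `B`) already lies in
`p ↾ A` for some choice of parameters `ā` from `A`. -/
def IsHeir {L' : Lang.{u}} (κ : Cardinal.{u}) {γ : Type u} {B : Set Ω}
    (p : Set (QF L' κ (γ ⊕ ↥B))) (A : Set Ω) (hAB : A ⊆ B) : Prop :=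
  ∀ (δ : Type u) (ψ : QF L' κ ((γ ⊕ ↥A) ⊕ δ)) (b : δ → ↥B),
    QF.map (Sum.elim (Sum.map id (Set.inclusion hAB)) fun i => Sum.inr (b i)) ψ ∈ p →
    ∃ a : δ → ↥A,
      QF.map (Sum.elim (Sum.map id (Set.inclusion hAB))
        fun i => Sum.inr (Set.inclusion hAB (a i))) ψ ∈ p

/-- The `(<κ)`-coheir independence relation: `A ⫝_M B` in `N` iff the quantifier-free
type of (an enumeration of) `A` over `|M| ∪ B` in `N̂` is a `(<κ)`-coheir over `|M|`. -/
noncomputable def coheirIndep (C : PreClass L Ω) (κ : Cardinal.{u}) (M N : Struc L Ω)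
    (A B : Set Ω) : Prop :=
  IsCoheir κ (Mor C κ N) (qftp κ (Mor C κ N) (Subtype.val : ↥A → Ω) (M.carrier ∪ B))
    M.carrier



/-- Satisfaction of qf formulas is preserved under isomorphisms. -/
theorem sat_iso_aux {L' : Lang.{u}} {Ω : Type u} {κ : Cardinal.{u}} {α : Type u}
    {M M' : Struc L' Ω} {f : Ω → Ω} (hf : IsIsoOn M M' f)
    {v : α → Ω} (hv : ∀ x, v x ∈ M.carrier) (φ : QF L' κ α) :
    QF.Sat M v φ ↔ QF.Sat M' (f ∘ v) φ := by
  induction φ with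
  | equal x y =>
    show v x = v y ↔ f (v x) = f (v y)
    exact ⟨fun h => by rw [h], fun h => hf.1 (hv x) (hv y) h⟩
  | rel r w => exact hf.2.2 r (v ∘ w) (fun i => hv _)
  | not φ ih => exact not_congr ih
  | conj o φs ih => exact forall_congr' fun i => ih i

/-- Satisfaction of qf formulas is preserved under substructures. -/
theorem sat_sub_aux {L' : Lang.{u}} {Ω : Type u} {κ : Cardinal.{u}} {α : Type u}
    {M N : Struc L' Ω} (hs : Substruc M N)
    {v : α → Ω} (hv : ∀ x, v x ∈ M.carrier) (φ : QF L' κ α) :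
    QF.Sat M v φ ↔ QF.Sat N v φ := by
  induction φ with
  | equal x y => exact Iff.rfl
  | rel r w => exact hs.2 r (v ∘ w) (fun i => hv _)
  | not φ ih => exact not_congr ih
  | conj o φs ih => exact forall_congr' fun i => ih i

theorem eat_qftp_aux {L L' : Lang.{u}} {Ω : Type u}
    (C : AbstractClass L Ω) (κ : Cardinal.{u})
    (E : FuncExp C.toPreClass L')
    {β : Type u} {A : Set Ω} (t₁ t₂ : GTriple C.toPreClass β A)
    (h : Eat C.toPreClass t₁ t₂) :
    qftp κ (E.hat t₁.N) t₁.seq A = qftp κ (E.hat t₂.N) t₂.seq A := by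
  obtain ⟨N, f₁, f₂, ⟨h1K, hNK, M₁', hiso1, hle1⟩, ⟨h2K, _, M₂', hiso2, hle2⟩,
    e₁, e₂, e⟩ := h
  have key : ∀ (t : GTriple C.toPreClass β A) (f : Ω → Ω) (M' : Struc L Ω),
      IsIsoOn t.N M' f → C.le M' N → (∀ a ∈ A, f a = a) →
      ∀ φ : QF L' κ (β ⊕ ↥A),
        QF.Sat (E.hat t.N) (Sum.elim t.seq Subtype.val) φ ↔
        QF.Sat (E.hat N) (f ∘ Sum.elim t.seq Subtype.val) φ := by
    intro t f M' hiso hle hfix φ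
    have hM'K : M' ∈ C.K := C.le_mem_left hle
    have hiso' : IsIsoOn (E.hat t.N) (E.hat M') f := E.iso_hat t.hN hM'K hiso
    have hsub : Substruc (E.hat M') (E.hat N) := E.sub_hat hle
    have hv : ∀ x, (Sum.elim t.seq Subtype.val : β ⊕ ↥A → Ω) x ∈ (E.hat t.N).carrier := by
      intro x
      rw [E.carrier_hat]
      cases x with
      | inl i => exact t.hseq i
      | inr a => exact t.hA a.2
    have hv' : ∀ x, (f ∘ (Sum.elim t.seq Subtype.val : β ⊕ ↥A → Ω)) x ∈ (E.hat M').carrier := by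
      rw [E.carrier_hat, ← hiso.2.1]
      intro x
      exact ⟨_, by rw [← E.carrier_hat]; exact hv x, rfl⟩
    exact (sat_iso_aux hiso' hv φ).trans (sat_sub_aux hsub hv' φ)
  have hveq : f₁ ∘ (Sum.elim t₁.seq Subtype.val : β ⊕ ↥A → Ω) = f₂ ∘ (Sum.elim t₂.seq Subtype.val : β ⊕ ↥A → Ω) := by
    funext k
    cases k with
    | inl i => exact e i
    | inr a => exact (e₁ a a.2).trans (e₂ a a.2).symm
  ext φ
  show QF.Sat _ _ φ ↔ QF.Sat _ _ φ
  rw [key t₁ f₁ M₁' hiso1 hle1 e₁ φ, key t₂ f₂ M₂' hiso2 hle2 e₂ φ, hveq]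

/-- Lemma 3.9. Let `K` be an abstract class, `κ` an infinite cardinal,
and `K̂` any `(<κ)`-ary functorial expansion of `K` with vocabulary `τ̂`. If two triples
`(b̄₁, A, N₁)` and `(b̄₂, A, N₂)` have the same Galois type, then the quantifier-free
`L_{κ,κ}(τ̂)`-types of `b̄₁` over `A` in `N̂₁` and of `b̄₂` over `A` in `N̂₂` coincide. -/
theorem gtp_eq_implies_qftp_eq {L L' : Lang.{u}} {Ω : Type u}
    (C : AbstractClass L Ω) (κ : Cardinal.{u}) (hκ : Cardinal.aleph0 ≤ κ)
    (E : FuncExp C.toPreClass L') (hE : ∀ r : L'.Rel, #(L'.arity r) < κ)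
    {β : Type u} {A : Set Ω} (t₁ t₂ : GTriple C.toPreClass β A)
    (h : gtp C.toPreClass t₁ = gtp C.toPreClass t₂) :
    qftp κ (E.hat t₁.N) t₁.seq A = qftp κ (E.hat t₂.N) t₂.seq A := by
  have he : Relation.EqvGen (Eat C.toPreClass) t₁ t₂ := Quotient.exact h
  clear h
  induction he with
  | rel x y hxy => exact eat_qftp_aux C κ E x y hxy
  | refl x => rfl
  | symm x y _ ih => exact ih.symm
  | trans x y z _ _ ih₁ ih₂ => exact ih₁.trans ih₂

end GM
end

section
/- Let K be an abstract class, κ an infinite cardinal, and K̂ any (<κ)-ary functorial expansion of K with vocabulary τ̂. Let N ∈ K, A ⊆ |N|, and α an ordinal. Then the map p ↦ p^s is a well-defined surjection from gS^α(A;N), the set of Galois types over A of length-α sequences from N, onto S^α_{qf-L_{κ,κ}(τ̂)}(A;N̂), the set of quantifier-free L_{κ,κ}(τ̂)-types over A of length-α sequences from N̂. -/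
/-!
Self-contained formalization background for "Infinitary stability theory" (Vasey):
infinitary (relational) vocabularies, structures, abstract classes, Galois types,
Galois Morleyization, quantifier-free `L_{κ,κ}` formulas and types, etc.
-/

universe u

namespace GM

open Cardinal

variable {L : Lang.{u}} {Ω : Type u}

open Cardinal
variable {L : Lang.{u}} {Ω : Type u}

/-- Satisfaction of quantifier-free formulas transfers along an isomorphism onto a
substructure. -/
theorem sat_iso_sub {L' : Lang.{u}} {κ : Cardinal.{u}} {M M' N' : Struc L' Ω} {f : Ω → Ω}
    (hiso : IsIsoOn M M' f) (hsub : Substruc M' N') {α : Type u} {v : α → Ω}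
    (hv : ∀ x, v x ∈ M.carrier) (φ : QF L' κ α) :
    QF.Sat M v φ ↔ QF.Sat N' (f ∘ v) φ := by
  induction φ with
  | equal x y =>
    simp only [QF.Sat, Function.comp]
    exact ⟨fun h => by rw [h], fun h => hiso.1 (hv x) (hv y) h⟩
  | rel r w =>
    simp only [QF.Sat]
    have h1 := hiso.2.2 r (v ∘ w) (fun i => hv (w i))
    have h2 := hsub.2 r (f ∘ v ∘ w) (fun i => by
      rw [← hiso.2.1]; exact ⟨v (w i), hv (w i), rfl⟩)
    exact h1.trans h2
  | not φ ih => simp only [QF.Sat]; rw [ih]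
  | conj o φs ih => simp only [QF.Sat]; exact forall_congr' fun i => ih i

/-- `E_at`-related triples have the same quantifier-free type in the expansion. -/
theorem qftp_eq_of_Eat {C : AbstractClass L Ω} {L' : Lang.{u}} (E : FuncExp C.toPreClass L')
    (κ : Cardinal.{u}) {β : Type u} {A : Set Ω} {t₁ t₂ : GTriple C.toPreClass β A}
    (h : Eat C.toPreClass t₁ t₂) :
    qftp κ (E.hat t₁.N) t₁.seq A = qftp κ (E.hat t₂.N) t₂.seq A := by
  obtain ⟨N, f₁, f₂, ⟨hN₁, hNK, M₁', hiso₁, hle₁⟩, ⟨hN₂, _, M₂', hiso₂, hle₂⟩,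
    hA₁, hA₂, hb⟩ := h
  have key : ∀ (N₀ : Struc L Ω) (hN₀ : N₀ ∈ C.toPreClass.K) (M' : Struc L Ω)
      (f : Ω → Ω) (hiso : IsIsoOn N₀ M' f) (hle : C.le M' N)
      (hAf : ∀ a ∈ A, f a = a) (hA₀ : A ⊆ N₀.carrier) (b : β → Ω)
      (hbm : ∀ i, b i ∈ N₀.carrier),
      qftp κ (E.hat N₀) b A = qftp κ (E.hat N) (f ∘ b) A := by
    intro N₀ hN₀ M' f hiso hle hAf hA₀ b hbm
    have hM'K : M' ∈ C.toPreClass.K := C.le_mem_left hle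
    have hisoh : IsIsoOn (E.hat N₀) (E.hat M') f := E.iso_hat hN₀ hM'K hiso
    have hsubh : Substruc (E.hat M') (E.hat N) := E.sub_hat hle
    have hv : ∀ x : β ⊕ ↥A, Sum.elim b Subtype.val x ∈ (E.hat N₀).carrier := by
      rw [E.carrier_hat]
      exact elim_mem hbm (fun a => hA₀ a.2)
    ext φ
    have h3 : f ∘ Sum.elim b (Subtype.val : ↥A → Ω) = Sum.elim (f ∘ b) Subtype.val := by
      funext x
      cases x with
      | inl i => rfl
      | inr a => exact hAf a.1 a.2
    have h4 := sat_iso_sub hisoh hsubh hv φ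
    rw [h3] at h4
    simpa only [qftp, Set.mem_setOf_eq] using h4
  rw [key t₁.N t₁.hN M₁' f₁ hiso₁ hle₁ hA₁ t₁.hA t₁.seq t₁.hseq,
    key t₂.N t₂.hN M₂' f₂ hiso₂ hle₂ hA₂ t₂.hA t₂.seq t₂.hseq]
  have hfb : f₁ ∘ t₁.seq = f₂ ∘ t₂.seq := funext hb
  rw [hfb]

/-- `E`-related triples have the same quantifier-free type in the expansion. -/
theorem qftp_eq_of_E {C : AbstractClass L Ω} {L' : Lang.{u}} (E : FuncExp C.toPreClass L')
    (κ : Cardinal.{u}) {β : Type u} {A : Set Ω} {t₁ t₂ : GTriple C.toPreClass β A}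
    (h : Relation.EqvGen (Eat C.toPreClass) t₁ t₂) :
    qftp κ (E.hat t₁.N) t₁.seq A = qftp κ (E.hat t₂.N) t₂.seq A := by
  induction h with
  | rel x y hxy => exact qftp_eq_of_Eat E κ hxy
  | refl x => rfl
  | symm x y _ ih => exact ih.symm
  | trans x y z _ _ ih₁ ih₂ => exact ih₁.trans ih₂

/-- Proposition 3.12. Let `K` be an abstract class, `κ` an infinite
cardinal, and `K̂` any `(<κ)`-ary functorial expansion of `K`. Let `N ∈ K`, `A ⊆ |N|`,
and `β` a length. Then `p ↦ p^s` is a well-defined map (independent of the choice of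
representatives) from `gS^β(A; N)` onto `S^β_{qf-L_{κ,κ}(τ̂)}(A; N̂)`: it maps into that
set and is a surjection onto it. -/
theorem gtp_to_qftp_welldefined_surjection {L L' : Lang.{u}} {Ω : Type u}
    (C : AbstractClass L Ω) (κ : Cardinal.{u}) (hκ : Cardinal.aleph0 ≤ κ)
    (E : FuncExp C.toPreClass L') (hE : ∀ r : L'.Rel, #(L'.arity r) < κ)
    (N : Struc L Ω) (hN : N ∈ C.toPreClass.K) (A : Set Ω) (hA : A ⊆ N.carrier)
    (β : Type u) :
    (∀ t : GTriple C.toPreClass β A,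
        GType.synE E κ (gtp C.toPreClass t) = qftp κ (E.hat t.N) t.seq A) ∧
    Set.MapsTo (GType.synE E κ) (gtypesRealized C.toPreClass β A N)
      (synTypesRealized κ (E.hat N) β A) ∧
    Set.SurjOn (GType.synE E κ) (gtypesRealized C.toPreClass β A N)
      (synTypesRealized κ (E.hat N) β A) := by
  have hwd : ∀ t : GTriple C.toPreClass β A,
      GType.synE E κ (gtp C.toPreClass t) = qftp κ (E.hat t.N) t.seq A := by
    intro t
    have h : Relation.EqvGen (Eat C.toPreClass) (Quotient.out (gtp C.toPreClass t)) t :=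
      Quotient.mk_out t
    exact qftp_eq_of_E E κ h
  refine ⟨hwd, ?_, ?_⟩
  · rintro p ⟨hNK, hAN, b, hb, rfl⟩
    refine ⟨b, ?_, ?_⟩
    · intro i
      rw [E.carrier_hat]
      exact hb i
    · show GType.synE E κ (gtp C.toPreClass ⟨N, hNK, hAN, b, hb⟩) = _
      exact hwd ⟨N, hNK, hAN, b, hb⟩
  · rintro t ⟨b, hb, rfl⟩
    have hb' : ∀ i, b i ∈ N.carrier := by
      intro i
      have := hb i
      rwa [E.carrier_hat] at this
    refine ⟨gtpOf C.toPreClass N b A hN hA hb', ⟨hN, hA, b, hb', rfl⟩, ?_⟩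
    show GType.synE E κ (gtp C.toPreClass ⟨N, hN, hA, b, hb'⟩) = _
    exact hwd ⟨N, hN, hA, b, hb'⟩

end GM
end

section
/- Let μ be a regular cardinal, K a μ-abstract elementary class, and K̂ a (<μ)-ary functorial expansion of K with vocabulary τ̂, ordered by M̂ ≤ N̂ iff M ≤ N. Then (K̂, ≤) is a μ-abstract elementary class with LS(K̂) = LS(K) + |τ̂|^{<μ}; in particular, for any μ-directed system ⟨M̂_i : i ∈ I⟩ in K̂, the union ∪_{i∈I} M̂_i equals the expansion of ∪_{i∈I} M_i (so in particular lies in K̂). -/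
/-!
Self-contained formalization background for "Infinitary stability theory" (Vasey):
infinitary (relational) vocabularies, structures, abstract classes, Galois types,
Galois Morleyization, quantifier-free `L_{κ,κ}` formulas and types, etc.
-/

universe u

namespace GM

open Cardinal

variable {L : Lang.{u}} {Ω : Type u}

open Cardinal
variable {L : Lang.{u}} {Ω : Type u}

/-- A partially ordered index type is `μ`-directed: every subset of size `< μ` has an
upper bound. -/
def MuDirected (μ : Cardinal.{u}) (ι : Type u) [Preorder ι] : Prop :=
  ∀ s : Set ι, #↥s < μ → ∃ ub, ∀ i ∈ s, i ≤ ub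

/-- `lam` is a Löwenheim–Skolem–Tarski number for the `μ`-AEC `C`. -/
def IsLSTNumMu {L : Lang.{u}} {Ω : Type u} (μ : Cardinal.{u}) (C : PreClass L Ω)
    (lam : Cardinal.{u}) : Prop :=
  lam ^< μ = lam ∧ #L.Rel + μ ≤ lam ∧
    ∀ M ∈ C.K, ∀ A : Set Ω, A ⊆ M.carrier →
      ∃ M₀, C.le M₀ M ∧ A ⊆ M₀.carrier ∧ #↥M₀.carrier ≤ #↥A ^< μ + lam

/-- A `μ`-abstract elementary class. -/
structure MuAEC (μ : Cardinal.{u}) (L : Lang.{u}) (Ω : Type u)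
    extends AbstractClass L Ω : Type u where
  arity_lt : ∀ r : L.Rel, #(L.arity r) < μ
  coherence : ∀ {M₀ M₁ M₂}, le M₀ M₂ → le M₁ M₂ → Substruc M₀ M₁ → le M₀ M₁
  tv_mem : ∀ {ι : Type u} [Preorder ι] [Nonempty ι] (M : ι → Struc L Ω),
    MuDirected μ ι → (∀ i j, i ≤ j → le (M i) (M j)) → unionStruc M ∈ K
  tv_ub : ∀ {ι : Type u} [Preorder ι] [Nonempty ι] (M : ι → Struc L Ω),
    MuDirected μ ι → (∀ i j, i ≤ j → le (M i) (M j)) → ∀ j, le (M j) (unionStruc M)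
  tv_lub : ∀ {ι : Type u} [Preorder ι] [Nonempty ι] (M : ι → Struc L Ω),
    MuDirected μ ι → (∀ i j, i ≤ j → le (M i) (M j)) →
    ∀ N, (∀ i, le (M i) N) → le (unionStruc M) N
  lst : ∃ lam, IsLSTNumMu μ toPreClass lam

/-- The Löwenheim–Skolem–Tarski number of a `μ`-AEC. -/
noncomputable def MuAEC.LSmu {μ : Cardinal.{u}} {L : Lang.{u}} {Ω : Type u}
    (A : MuAEC μ L Ω) : Cardinal.{u} :=
  sInf { lam | IsLSTNumMu μ A.toPreClass lam }


section Statement7Aux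

open Cardinal Ordinal


lemma aux_mu_le_powerlt {x μ : Cardinal.{u}} (hμ : μ.IsRegular) (hx : 2 ≤ x) :
    μ ≤ x ^< μ := by
  have h2 : (2 : Cardinal.{u}) ^< μ ≤ x ^< μ :=
    Cardinal.powerlt_le.2 fun c hc =>
      (Cardinal.power_le_power_right hx).trans (Cardinal.le_powerlt x hc)
  refine le_trans ?_ h2
  by_contra h
  push_neg at h
  exact absurd (Cardinal.le_powerlt 2 h) (not_le.2 (Cardinal.cantor _))

lemma aux_powerlt_pow_le {x μ κ : Cardinal.{u}} (hμ : μ.IsRegular) (hx : 2 ≤ x)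
    (hκ : κ < μ) : (x ^< μ) ^ κ ≤ x ^< μ := by
  haveI : IsWellOrder μ.ord.ToType (· < ·) := isWellOrder_lt
  set X := Quotient.out x with hXdef
  set K := Quotient.out κ with hKdef
  have hmkK : #K = κ := mk_out κ
  have hmkX : #X = x := mk_out x
  set T := (Σ i : μ.ord.ToType, (Set.Iio i → X)) with hT
  have hμy : μ ≤ x ^< μ := aux_mu_le_powerlt hμ hx
  have hℵ₀y : ℵ₀ ≤ x ^< μ := hμ.aleph0_le.trans hμy
  -- x ^< μ ≤ #T
  have hyT : x ^< μ ≤ #T := by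
    rw [Cardinal.powerlt_le]
    intro c hc
    have hco : c.ord < type ((· < ·) : μ.ord.ToType → μ.ord.ToType → Prop) := by
      rw [type_toType]; exact Cardinal.ord_lt_ord.2 hc
    set i := enum ((· < ·) : μ.ord.ToType → μ.ord.ToType → Prop) ⟨c.ord, hco⟩ with hi
    have hIio : #(Set.Iio i) = c := by
      have h1 : #{y // y < i} = (typein ((· < ·) : μ.ord.ToType → μ.ord.ToType → Prop) i).card :=
        card_typein i
      rw [hi, typein_enum, Cardinal.card_ord] at h1
      exact h1
    calc x ^ c = #(Set.Iio i → X) := by rw [← hmkX, ← hIio, Cardinal.power_def]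
    _ ≤ #T := Cardinal.mk_le_of_injective (f := fun g => (⟨i, g⟩ : T))
        (fun a b hab => by exact sigma_mk_injective hab)
  -- ∀ a b : T with bound i, encoding equality implies equality
  have pair_ext : ∀ (i : μ.ord.ToType) (a b : T), a.1 < i → b.1 < i →
      (∀ (j : μ.ord.ToType), j < i →
        (if h : j < a.1 then some (a.2 ⟨j, h⟩) else none) =
        (if h : j < b.1 then some (b.2 ⟨j, h⟩) else none)) → a = b := by
    rintro i ⟨ia, ga⟩ ⟨ib, gb⟩ hia hib hj
    obtain rfl : ia = ib := by
      by_contra hne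
      rcases lt_or_gt_of_ne hne with hl | hl
      · have h := hj ia hia
        rw [dif_neg (lt_irrefl _), dif_pos hl] at h
        cases h
      · have h := hj ib hib
        rw [dif_pos hl, dif_neg (lt_irrefl _)] at h
        cases h
    refine congrArg (Sigma.mk ia) (funext fun j => ?_)
    have h := hj j.1 (j.2.trans hia)
    rw [dif_pos (show (j : μ.ord.ToType) < ia from j.2),
      dif_pos (show (j : μ.ord.ToType) < ia from j.2)] at h
    exact Option.some.inj h
  -- each slice is small
  have hslice : ∀ i : μ.ord.ToType, #{F : K → T | ∀ k, (F k).1 < i} ≤ x ^< μ := by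
    intro i
    have hδ : #(Set.Iio i) < μ := Cardinal.mk_Iio_ord_toType i
    have hδκ : #(Set.Iio i) * κ < μ :=
      Cardinal.mul_lt_of_lt hμ.aleph0_le hδ hκ
    have hx1 : x + 1 ≤ x * x := by
      have h1x : (1 : Cardinal) ≤ x := le_trans (by norm_num) hx
      calc x + 1 ≤ x + x := add_le_add le_rfl h1x
      _ = 2 * x := (two_mul x).symm
      _ ≤ x * x := mul_le_mul' hx le_rfl
    have hinj : Function.Injective
        (fun (F : {F : K → T // ∀ k, (F k).1 < i}) => fun (k : K) (j : Set.Iio i) =>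
          if h : (j : μ.ord.ToType) < (F.1 k).1 then some ((F.1 k).2 ⟨j, h⟩) else none) := by
      rintro ⟨F, hF⟩ ⟨G, hG⟩ hFG
      simp only at hFG
      refine Subtype.ext (funext fun k => ?_)
      exact pair_ext i (F k) (G k) (hF k) (hG k)
        (fun j hji => congrFun (congrFun hFG k) ⟨j, hji⟩)
    calc #{F : K → T | ∀ k, (F k).1 < i}
        ≤ #(K → Set.Iio i → Option X) := Cardinal.mk_le_of_injective hinj
    _ = (#(Option X) ^ #(Set.Iio i)) ^ #K := by
        rw [Cardinal.power_def, Cardinal.power_def]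
    _ = (x + 1) ^ (#(Set.Iio i) * κ) := by
        rw [Cardinal.mk_option, hmkX, hmkK, ← Cardinal.power_mul]
    _ ≤ (x * x) ^ (#(Set.Iio i) * κ) := Cardinal.power_le_power_right hx1
    _ = x ^ (#(Set.Iio i) * κ + #(Set.Iio i) * κ) := by
        rw [Cardinal.power_add, Cardinal.mul_power]
    _ ≤ x ^< μ := Cardinal.le_powerlt x
        (Cardinal.add_lt_of_lt hμ.aleph0_le hδκ hδκ)
  -- main bound
  have hcover : (Set.univ : Set (K → T)) ⊆
      ⋃ i : μ.ord.ToType, {F : K → T | ∀ k, (F k).1 < i} := by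
    intro F _
    have hcof : #K < (μ.ord).cof := by rw [hμ.cof_eq, hmkK]; exact hκ
    have hsup : (⨆ k : K, Order.succ (typein ((· < ·) : μ.ord.ToType → μ.ord.ToType → Prop) (F k).1)) < μ.ord := by
      apply iSup_lt_ord hcof
      intro k
      have h1 := typein_lt_type ((· < ·) : μ.ord.ToType → μ.ord.ToType → Prop) (F k).1
      rw [type_toType] at h1
      exact (Cardinal.isSuccLimit_ord hμ.aleph0_le).succ_lt h1
    refine Set.mem_iUnion.2
      ⟨enum ((· < ·) : μ.ord.ToType → μ.ord.ToType → Prop) ⟨_, by rw [type_toType]; exact Set.mem_Iio.2 hsup⟩, fun k => ?_⟩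
    show (F k).1 < _
    rw [← typein_lt_typein ((· < ·) : μ.ord.ToType → μ.ord.ToType → Prop)]
    erw [typein_enum]
    exact lt_of_lt_of_le (Order.lt_succ _) (Ordinal.le_iSup _ k)
  have hmain : #(K → T) ≤ x ^< μ := by
    calc #(K → T) = #(Set.univ : Set (K → T)) := Cardinal.mk_univ.symm
    _ ≤ #(⋃ i : μ.ord.ToType, {F : K → T | ∀ k, (F k).1 < i}) := Cardinal.mk_le_mk_of_subset hcover
    _ ≤ Cardinal.sum (fun i : μ.ord.ToType => #{F : K → T | ∀ k, (F k).1 < i}) :=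
        Cardinal.mk_iUnion_le_sum_mk
    _ ≤ Cardinal.sum (fun _ : μ.ord.ToType => x ^< μ) := Cardinal.sum_le_sum _ _ hslice
    _ = #(μ.ord.ToType) * (x ^< μ) := Cardinal.sum_const' _ _
    _ = μ * (x ^< μ) := by rw [Cardinal.mk_ord_toType]
    _ = x ^< μ := by rw [Cardinal.mul_eq_max hμ.aleph0_le hℵ₀y, max_eq_right hμy]
  calc (x ^< μ) ^ κ ≤ #T ^ κ := Cardinal.power_le_power_right hyT
  _ = #(K → T) := by rw [← hmkK, Cardinal.power_def]
  _ ≤ x ^< μ := hmain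



theorem Struc.ext' {L : Lang.{u}} {Ω : Type u} {M N : Struc L Ω}
    (hc : M.carrier = N.carrier) (hr : ∀ r v, M.rel r v ↔ N.rel r v) : M = N := by
  obtain ⟨cM, rM, dM⟩ := M
  obtain ⟨cN, rN, dN⟩ := N
  dsimp at hc hr
  subst hc
  have hrel : rM = rN := funext fun r => funext fun v => propext (hr r v)
  subst hrel
  rfl

theorem iso_unique {L : Lang.{u}} {Ω : Type u} {M N N' : Struc L Ω} {f : Ω → Ω}
    (h : IsIsoOn M N f) (h' : IsIsoOn M N' f) : N = N' := by
  obtain ⟨hinj, himg, hrel⟩ := h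
  obtain ⟨_, himg', hrel'⟩ := h'
  have hc : N.carrier = N'.carrier := himg.symm.trans himg'
  apply Struc.ext' hc
  intro r v
  by_cases hv : ∀ i, v i ∈ N.carrier
  · have hv' : ∀ i, ∃ w, w ∈ M.carrier ∧ f w = v i := by
      intro i
      have h1 := hv i
      rw [← himg] at h1
      obtain ⟨w, hw, hfw⟩ := h1
      exact ⟨w, hw, hfw⟩
    choose w hw hfw using hv'
    have hfv : v = f ∘ w := funext fun i => (hfw i).symm
    rw [hfv]
    exact ⟨fun hh => (hrel' r w hw).1 ((hrel r w hw).2 hh),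
      fun hh => (hrel r w hw).1 ((hrel' r w hw).2 hh)⟩
  · constructor
    · intro hR
      exact absurd (N.rel_dom r v hR) hv
    · intro hR
      refine absurd (fun i => ?_) hv
      have h2 := N'.rel_dom r v hR i
      rwa [← hc] at h2

theorem LangExt.reduct_sub {L L' : Lang.{u}} {Ω : Type u} (E : LangExt L L')
    {M N : Struc L' Ω} (h : Substruc M N) : Substruc (E.reduct M) (E.reduct N) :=
  ⟨h.1, fun r v hv => h.2 (E.emb r) _ (fun i => hv (cast (E.arity_eq r) i))⟩

theorem LangExt.reduct_iso {L L' : Lang.{u}} {Ω : Type u} (E : LangExt L L')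
    {M N : Struc L' Ω} {f : Ω → Ω} (h : IsIsoOn M N f) :
    IsIsoOn (E.reduct M) (E.reduct N) f :=
  ⟨h.1, h.2.1, fun r v hv => h.2.2 (E.emb r) _ (fun i => hv (cast (E.arity_eq r) i))⟩

theorem unionStruc_hat {L L' : Lang.{u}} {Ω : Type u} {μ : Cardinal.{u}}
    (A : MuAEC μ L Ω) (E : FuncExp A.toPreClass L')
    (hE : ∀ r : L'.Rel, #(L'.arity r) < μ)
    {ι : Type u} [Preorder ι] [Nonempty ι] (M : ι → Struc L Ω)
    (hdir : MuDirected μ ι) (hmono : ∀ i j, i ≤ j → A.le (M i) (M j)) :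
    unionStruc (fun i => E.hat (M i)) = E.hat (unionStruc M) := by
  have hub : ∀ j, A.le (M j) (unionStruc M) := A.tv_ub M hdir hmono
  have hsub : ∀ j, Substruc (E.hat (M j)) (E.hat (unionStruc M)) :=
    fun j => E.sub_hat (hub j)
  apply Struc.ext'
  · show (⋃ i, (E.hat (M i)).carrier) = (E.hat (unionStruc M)).carrier
    simp only [E.carrier_hat]
    rfl
  · intro r v
    constructor
    · rintro ⟨i, hvi, hrel⟩
      exact ((hsub i).2 r v hvi).1 hrel
    · intro hrel
      have hvmem := (E.hat (unionStruc M)).rel_dom r v hrel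
      have hvU : ∀ k, ∃ i, v k ∈ (M i).carrier := by
        intro k
        have h1 := hvmem k
        rw [E.carrier_hat] at h1
        exact Set.mem_iUnion.1 h1
      choose idx hidx using hvU
      obtain ⟨ub, hub'⟩ := hdir (Set.range idx)
        (lt_of_le_of_lt Cardinal.mk_range_le (hE r))
      have hvub : ∀ k, v k ∈ (E.hat (M ub)).carrier := by
        intro k
        rw [E.carrier_hat]
        exact (A.le_sub (hmono _ _ (hub' _ (Set.mem_range_self k)))).1 (hidx k)
      exact ⟨ub, hvub, ((hsub ub).2 r v hvub).2 hrel⟩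

end Statement7Aux

/-- Proposition 3.7(4). Let `μ` be a regular cardinal, `K` a `μ`-AEC,
and `K̂` a `(<μ)`-ary functorial expansion of `K`, ordered by `M̂ ≤ N̂` iff `M ≤ N`.
Then `(K̂, ≤)` is a `μ`-AEC with `LS(K̂) = LS(K) + |τ̂|^{<μ}`; in particular for any
`μ`-directed system `⟨M̂ᵢ : i ∈ I⟩` in `K̂` the union `⋃ᵢ M̂ᵢ` equals the expansion of
`⋃ᵢ Mᵢ` (so in particular lies in `K̂`). -/
theorem funcexp_of_muAEC_is_muAEC {L L' : Lang.{u}} {Ω : Type u}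
    (μ : Cardinal.{u}) (hμ : μ.IsRegular) (A : MuAEC μ L Ω)
    (E : FuncExp A.toPreClass L') (hE : ∀ r : L'.Rel, #(L'.arity r) < μ) :
    (∃ A' : MuAEC μ L' Ω, A'.toPreClass = E.pre ∧
        A'.LSmu = A.LSmu + #L'.Rel ^< μ) ∧
    (∀ (ι : Type u) [Preorder ι] [Nonempty ι] (M : ι → Struc L Ω),
        MuDirected μ ι → (∀ i j, i ≤ j → A.le (M i) (M j)) →
        unionStruc (fun i => E.hat (M i)) = E.hat (unionStruc M)) := by
  classical
  have hatinj : ∀ {M N : Struc L Ω}, M ∈ A.K → N ∈ A.K → E.hat M = E.hat N → M = N := by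
    intro M N hM hN h
    have h1 := E.reduct_hat M hM
    rw [h, E.reduct_hat N hN] at h1
    exact h1.symm
  have unfold_le : ∀ {M' N' : Struc L' Ω}, E.pre.le M' N' →
      A.le (E.toLangExt.reduct M') (E.toLangExt.reduct N') ∧
      M' = E.hat (E.toLangExt.reduct M') ∧ N' = E.hat (E.toLangExt.reduct N') := by
    intro M' N' h
    obtain ⟨Ma, Nb, hab, rfl, rfl⟩ := h
    rw [E.reduct_hat Ma (A.le_mem_left hab), E.reduct_hat Nb (A.le_mem_right hab)]
    exact ⟨hab, rfl, rfl⟩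
  -- LST number facts
  have hSA : IsLSTNumMu μ A.toPreClass A.LSmu := csInf_mem A.lst
  set lam0 := A.LSmu with hl0def
  set x := #L'.Rel with hxdef
  have hμlam0 : μ ≤ lam0 := le_trans (self_le_add_left μ _) hSA.2.1
  have hℵ₀lam0 : ℵ₀ ≤ lam0 := hμ.aleph0_le.trans hμlam0
  have h1μ : (1 : Cardinal) < μ := Cardinal.one_lt_aleph0.trans_le hμ.aleph0_le
  have hxy : x ≤ x ^< μ := by
    have h := Cardinal.le_powerlt x h1μ
    rwa [Cardinal.power_one] at h
  have hLL' : #L.Rel ≤ x := Cardinal.mk_le_of_injective E.inj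
  set lam := lam0 + x ^< μ with hlamdef
  have hlam0lam : lam0 ≤ lam := le_self_add
  have hylam : x ^< μ ≤ lam := le_add_self
  have hℵ₀lam : ℵ₀ ≤ lam := hℵ₀lam0.trans hlam0lam
  have hpow : lam ^< μ = lam := by
    apply le_antisymm
    · rw [Cardinal.powerlt_le]
      intro c hc
      rcases le_or_gt (x ^< μ) lam0 with hcase | hcase
      · rw [hlamdef, Cardinal.add_eq_left hℵ₀lam0 hcase]
        calc lam0 ^ c ≤ lam0 ^< μ := Cardinal.le_powerlt _ hc
        _ = lam0 := hSA.1
      · rcases le_or_gt x 1 with hx1 | hx1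
        · have hy1 : x ^< μ ≤ 1 := by
            rw [Cardinal.powerlt_le]
            intro c' _
            calc x ^ c' ≤ 1 ^ c' := Cardinal.power_le_power_right hx1
            _ = 1 := Cardinal.one_power
          exact absurd hcase (not_lt.2 (hy1.trans ((le_of_lt Cardinal.one_lt_aleph0).trans hℵ₀lam0)))
        · have hx2 : (2 : Cardinal) ≤ x := by
            rw [hxdef] at hx1 ⊢
            haveI := Cardinal.one_lt_iff_nontrivial.1 hx1
            obtain ⟨a, b, hab⟩ := exists_pair_ne L'.Rel
            exact Cardinal.two_le_iff.2 ⟨a, b, hab⟩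
          have hy : lam = x ^< μ := by
            rw [hlamdef]
            exact Cardinal.add_eq_right (hℵ₀lam0.trans hcase.le) hcase.le
          rw [hy]
          exact aux_powerlt_pow_le hμ hx2 hc
    · have h := Cardinal.le_powerlt lam h1μ
      rwa [Cardinal.power_one] at h
  have hclause2 : x + μ ≤ lam := by
    calc x + μ ≤ lam + lam := add_le_add (hxy.trans hylam) (hμlam0.trans hlam0lam)
    _ = lam := Cardinal.add_eq_self hℵ₀lam
  have hclause3 : ∀ M' ∈ E.pre.K, ∀ B : Set Ω, B ⊆ M'.carrier →
      ∃ M₀, E.pre.le M₀ M' ∧ B ⊆ M₀.carrier ∧ #↥M₀.carrier ≤ #↥B ^< μ + lam := by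
    intro M' hM' B hB
    obtain ⟨M, hM, rfl⟩ := hM'
    rw [E.carrier_hat] at hB
    obtain ⟨M₀, hle, hBsub, hbound⟩ := hSA.2.2 M hM B hB
    refine ⟨E.hat M₀, ⟨M₀, M, hle, rfl, rfl⟩, ?_, ?_⟩
    · rw [E.carrier_hat]
      exact hBsub
    · rw [E.carrier_hat]
      exact hbound.trans (add_le_add_right hlam0lam _)
  have hlamE : IsLSTNumMu μ E.pre lam := ⟨hpow, hclause2, hclause3⟩
  have hmin : ∀ c, IsLSTNumMu μ E.pre c → lam ≤ c := by
    intro c hc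
    have hxc : x ≤ c := le_trans le_self_add hc.2.1
    have hcA : IsLSTNumMu μ A.toPreClass c := by
      refine ⟨hc.1, le_trans (add_le_add_left hLL' μ) hc.2.1, ?_⟩
      intro M hM B hB
      obtain ⟨M₀', hle', hB', hbound⟩ := hc.2.2 (E.hat M) ⟨M, hM, rfl⟩ B
        (by rw [E.carrier_hat]; exact hB)
      obtain ⟨M₀, N, h0, rfl, hN⟩ := hle'
      obtain rfl : N = M := hatinj (A.le_mem_right h0) hM hN.symm
      rw [E.carrier_hat] at hB' hbound
      exact ⟨M₀, h0, hB', hbound⟩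
    have h1 : lam0 ≤ c := csInf_le' hcA
    have h2 : x ^< μ ≤ c := by
      have h3 : x ^< μ ≤ c ^< μ := Cardinal.powerlt_le.2 fun c' hc' =>
        (Cardinal.power_le_power_right hxc).trans (Cardinal.le_powerlt c hc')
      rwa [hc.1] at h3
    calc lam = lam0 + x ^< μ := hlamdef
    _ ≤ c + c := add_le_add h1 h2
    _ = c := Cardinal.add_eq_self
        (hμ.aleph0_le.trans (le_trans (self_le_add_left μ _) hc.2.1))
  constructor
  · refine ⟨⟨⟨E.pre, ?_, ?_, ?_, ?_, ?_, ?_, ?_⟩, hE, ?_, ?_, ?_, ?_, ⟨lam, hlamE⟩⟩,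
      rfl, ?_⟩
    · -- le_refl
      intro M' hM'
      obtain ⟨M, hM, rfl⟩ := hM'
      exact ⟨M, M, A.le_refl M hM, rfl, rfl⟩
    · -- le_antisymm
      intro M' N' h1 h2
      obtain ⟨hA1, hM', hN'⟩ := unfold_le h1
      obtain ⟨hA2, -, -⟩ := unfold_le h2
      rw [hM', hN']
      exact congrArg E.hat (A.le_antisymm hA1 hA2)
    · -- le_trans
      intro M' N' P' h1 h2
      obtain ⟨hA1, hM', -⟩ := unfold_le h1
      obtain ⟨hA2, -, hP'⟩ := unfold_le h2
      exact ⟨_, _, A.le_trans hA1 hA2, hM', hP'⟩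
    · -- le_mem_left
      intro M' N' h
      obtain ⟨hA1, hM', -⟩ := unfold_le h
      exact ⟨_, A.le_mem_left hA1, hM'.symm⟩
    · -- le_mem_right
      intro M' N' h
      obtain ⟨hA1, -, hN'⟩ := unfold_le h
      exact ⟨_, A.le_mem_right hA1, hN'.symm⟩
    · -- le_sub
      intro M' N' h
      obtain ⟨M0, N0, hA, rfl, rfl⟩ := h
      exact E.sub_hat hA
    · -- iso_closed
      intro M' N' N'' f hle hiso
      obtain ⟨hMN, hM', hN'⟩ := unfold_le hle
      have hMK : E.toLangExt.reduct M' ∈ A.K := A.le_mem_left hMN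
      have hNK : E.toLangExt.reduct N' ∈ A.K := A.le_mem_right hMN
      have hisoN' : IsIsoOn (E.hat (E.toLangExt.reduct N')) N'' f := by
        rw [← hN']
        exact hiso
      have hisoL : IsIsoOn (E.toLangExt.reduct N') (E.toLangExt.reduct N'') f := by
        have h := E.toLangExt.reduct_iso hisoN'
        rwa [E.reduct_hat _ hNK] at h
      obtain ⟨hN''K, M₀, hisoM, hleM⟩ := A.iso_closed hMN hisoL
      have hN''eq : N'' = E.hat (E.toLangExt.reduct N'') :=
        iso_unique hisoN' (E.iso_hat hNK hN''K hisoL)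
      refine ⟨⟨_, hN''K, hN''eq.symm⟩, E.hat M₀, ?_, M₀, _, hleM, rfl, hN''eq⟩
      rw [hM']
      exact E.iso_hat hMK (A.le_mem_left hleM) hisoM
    · -- coherence
      intro M₀' M₁' M₂' h02 h12 hsub
      obtain ⟨h02L, hM0, -⟩ := unfold_le h02
      obtain ⟨h12L, hM1, -⟩ := unfold_le h12
      exact ⟨_, _, A.coherence h02L h12L (E.toLangExt.reduct_sub hsub), hM0, hM1⟩
    · -- tv_mem
      intro ι _ _ M' hdir hmono'
      have hmL : ∀ i j, i ≤ j →
          A.le (E.toLangExt.reduct (M' i)) (E.toLangExt.reduct (M' j)) :=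
        fun i j hij => (unfold_le (hmono' i j hij)).1
      have hM'eq : M' = fun i => E.hat (E.toLangExt.reduct (M' i)) :=
        funext fun i => (unfold_le (hmono' i i le_rfl)).2.1
      rw [hM'eq, unionStruc_hat A E hE _ hdir hmL]
      exact Set.mem_image_of_mem _ (A.tv_mem _ hdir hmL)
    · -- tv_ub
      intro ι _ _ M' hdir hmono' j
      have hmL : ∀ i j, i ≤ j →
          A.le (E.toLangExt.reduct (M' i)) (E.toLangExt.reduct (M' j)) :=
        fun i j hij => (unfold_le (hmono' i j hij)).1
      have hM'eq : M' = fun i => E.hat (E.toLangExt.reduct (M' i)) :=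
        funext fun i => (unfold_le (hmono' i i le_rfl)).2.1
      refine ⟨E.toLangExt.reduct (M' j), unionStruc (fun i => E.toLangExt.reduct (M' i)),
        A.tv_ub _ hdir hmL j, (unfold_le (hmono' j j le_rfl)).2.1, ?_⟩
      exact (congrArg unionStruc hM'eq).trans (unionStruc_hat A E hE _ hdir hmL)
    · -- tv_lub
      intro ι _ _ M' hdir hmono' N' hN'
      have hmL : ∀ i j, i ≤ j →
          A.le (E.toLangExt.reduct (M' i)) (E.toLangExt.reduct (M' j)) :=
        fun i j hij => (unfold_le (hmono' i j hij)).1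
      have hM'eq : M' = fun i => E.hat (E.toLangExt.reduct (M' i)) :=
        funext fun i => (unfold_le (hmono' i i le_rfl)).2.1
      obtain ⟨M1, N, h1, hM1, hNeq⟩ := hN' (Classical.arbitrary ι)
      have hNK : N ∈ A.K := A.le_mem_right h1
      have hall : ∀ i, A.le (E.toLangExt.reduct (M' i)) N := by
        intro i
        obtain ⟨Ma, Nb, hab, hMa, hNb⟩ := hN' i
        have h2 : Nb = N := hatinj (A.le_mem_right hab) hNK (hNb.symm.trans hNeq)
        have hred : E.toLangExt.reduct (M' i) = Ma := by
          rw [hMa, E.reduct_hat Ma (A.le_mem_left hab)]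
        rw [hred, ← h2]
        exact hab
      refine ⟨unionStruc (fun i => E.toLangExt.reduct (M' i)), N,
        A.tv_lub _ hdir hmL N hall, ?_, hNeq⟩
      exact (congrArg unionStruc hM'eq).trans (unionStruc_hat A E hE _ hdir hmL)
    · -- LSmu equality
      show sInf {lam' | IsLSTNumMu μ E.pre lam'} = lam
      exact le_antisymm (csInf_le' hlamE) (le_csInf ⟨lam, hlamE⟩ hmin)
  · intro ι _ _ M hdir hmono
    exact unionStruc_hat A E hE M hdir hmono

end GM
end

section
/- Let K be an abstract class, κ an infinite cardinal, K̂ the (<κ)-Galois Morleyization of K, α < κ a cardinal, and N ∈ K. (1) If N̂ has the syntactic α-order property of length μ, then N has the Galois α-order property of length μ. (2) Let χ := |gS^{α+α}(∅)| and let λ, μ be cardinals with μ ≥ (2^{λ+χ})⁺; if N has the Galois α-order property of length μ, then N̂ has the syntactic α-order property of length λ. In particular, K has the Galois α-order property (i.e., of every length) if and only if K̂ has the syntactic α-order property (of every length). -/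
/-!
Self-contained formalization background for "Infinitary stability theory" (Vasey):
infinitary (relational) vocabularies, structures, abstract classes, Galois types,
Galois Morleyization, quantifier-free `L_{κ,κ}` formulas and types, etc.
-/

universe u


namespace GMER
open Cardinal Ordinal

variable {W O P : Type u}

section seq
variable [LinearOrder W] [WellFoundedLT W] [LinearOrder O] [WellFoundedLT O]

/-- candidates extending `prev` that agree with `a` over `prev`. -/
def ERgood (Fs : W → W → P) (a : W) (prev : Set W) : Set W :=
  {w | w ∉ prev ∧ ∀ v ∈ prev, Fs v w = Fs v a}

open Classical in
noncomputable def oleast [LinearOrder W] [WellFoundedLT W] (s : Set W) : Option W :=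
  if h : s.Nonempty then some (WellFounded.min wellFounded_lt s h) else none

noncomputable def ERnext (Fs : W → W → P) (a : W) (prev : Set W) : Option W :=
  oleast (ERgood Fs a prev)

noncomputable def ERseq (Fs : W → W → P) (a : W) : O → Option W :=
  WellFounded.fix wellFounded_lt
    (fun ξ ih => ERnext Fs a {w | ∃ ν, ∃ h : ν < ξ, ih ν h = some w})

/-- values appearing before stage `ξ`. -/
def ERprev (Fs : W → W → P) (a : W) (ξ : O) : Set W :=
  {w | ∃ ν, ∃ _ : ν < ξ, ERseq Fs a ν = some w}

omit [LinearOrder W] [WellFoundedLT W] in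
theorem ERseq_eq (Fs : W → W → P) (a : W) [LinearOrder W] [WellFoundedLT W] (ξ : O) :
    ERseq Fs a ξ = ERnext Fs a (ERprev Fs a ξ) := by
  rw [ERseq, WellFounded.fix_eq]
  rfl

theorem ERseq_good {Fs : W → W → P} {a : W} {ξ : O} {w : W}
    (h : ERseq Fs a ξ = some w) : w ∈ ERgood Fs a (ERprev Fs a ξ) := by
  classical
  rw [ERseq_eq, ERnext, oleast] at h
  split_ifs at h with h'
  cases Option.some.inj h
  exact WellFounded.min_mem _ _ h' 

theorem ERseq_some {Fs : W → W → P} {a : W} {ξ : O}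
    (h : a ∉ ERprev Fs a ξ) : ∃ w, ERseq Fs a ξ = some w := by
  classical
  have hne : (ERgood Fs a (ERprev Fs a ξ)).Nonempty := ⟨a, h, fun v _ => rfl⟩
  rw [ERseq_eq, ERnext, oleast, dif_pos hne]
  exact ⟨_, rfl⟩

/-- determinism: equal traces give equal points. -/
theorem ERseq_det {Fs : W → W → P} {a b : W} {δ : O}
    (ha : ERseq Fs a δ = some a) (hb : ERseq Fs b δ = some b)
    (htr : ∀ ν, ν < δ → (ERseq Fs a ν).map (fun w => Fs w a)
      = (ERseq Fs b ν).map (fun w => Fs w b)) : a = b := by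
  have key : ∀ ξ : O, ξ ≤ δ → ERseq Fs a ξ = ERseq Fs b ξ := by
    intro ξ
    induction ξ using WellFoundedLT.induction with
    | ind ξ ih =>
      intro hξ
      have hcol : ∀ (ν : O), ν < ξ → ∀ v : W, ERseq Fs a ν = some v → Fs v a = Fs v b := by
        intro ν hν v hsome
        have h1 := htr ν (lt_of_lt_of_le hν hξ)
        have hsome' : ERseq Fs b ν = some v := by
          rw [← ih ν hν (hν.le.trans hξ)]; exact hsome
        rw [hsome, hsome'] at h1
        exact Option.some.inj h1
      have hprev : ERprev Fs a ξ = ERprev Fs b ξ := by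
        ext w
        constructor <;> rintro ⟨ν, hν, hw⟩
        · exact ⟨ν, hν, (ih ν hν (hν.le.trans hξ)).symm.trans hw⟩
        · exact ⟨ν, hν, (ih ν hν (hν.le.trans hξ)).trans hw⟩
      have hgood : ERgood Fs a (ERprev Fs a ξ) = ERgood Fs b (ERprev Fs b ξ) := by
        rw [← hprev]
        ext w
        constructor
        · rintro ⟨h1, h2⟩
          refine ⟨h1, fun v hv => ?_⟩
          obtain ⟨ν, hν, hsome⟩ := hv
          rw [h2 v ⟨ν, hν, hsome⟩, hcol ν hν v hsome]
        · rintro ⟨h1, h2⟩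
          refine ⟨h1, fun v hv => ?_⟩
          obtain ⟨ν, hν, hsome⟩ := hv
          rw [h2 v ⟨ν, hν, hsome⟩, hcol ν hν v hsome]
      rw [ERseq_eq Fs a ξ, ERseq_eq Fs b ξ, ERnext, ERnext, hgood]
  rw [key δ le_rfl, hb] at ha
  exact (Option.some.inj ha).symm

end seq

section count
variable [LinearOrder O]

open Classical in
noncomputable def ERcode (δ : W → O) (T : W → O → Option P) (η₀ : O) (hδη : ∀ a, δ a < η₀)
    (K : Type u) (e : ∀ a, ↥(Set.Iio (δ a)) ↪ K) (a : W) (k : K) :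
    Option (↥(Set.Iio η₀) × Option P) :=
  if h : ∃ ν : ↥(Set.Iio (δ a)), e a ν = k then
    some (⟨h.choose.1, lt_trans h.choose.2 (hδη a)⟩, T a h.choose.1) else none

theorem ERcode_val (δ : W → O) (T : W → O → Option P) (η₀ : O) (hδη : ∀ a, δ a < η₀)
    (K : Type u) (e : ∀ a, ↥(Set.Iio (δ a)) ↪ K) (a : W) (ν : O) (hν : ν ∈ Set.Iio (δ a)) :
    ERcode δ T η₀ hδη K e a (e a ⟨ν, hν⟩) = some (⟨ν, lt_trans hν (hδη a)⟩, T a ν) := by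
  have hex : ∃ ν' : ↥(Set.Iio (δ a)), e a ν' = e a ⟨ν, hν⟩ := ⟨⟨ν, hν⟩, rfl⟩
  have hch : hex.choose = ⟨ν, hν⟩ := (e a).injective hex.choose_spec
  rw [ERcode, dif_pos hex]
  exact congrArg
    (fun z : ↥(Set.Iio (δ a)) => some ((⟨z.1, lt_trans z.2 (hδη a)⟩ : ↥(Set.Iio η₀)), T a z.1)) hch

theorem ERcode_inj (δ : W → O) (T : W → O → Option P) (η₀ : O) (hδη : ∀ a, δ a < η₀)
    (K : Type u) (e : ∀ a, ↥(Set.Iio (δ a)) ↪ K)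
    (hdet : ∀ a b, δ a = δ b → (∀ ν, ν < δ a → T a ν = T b ν) → a = b) :
    Function.Injective (ERcode δ T η₀ hδη K e) := by
  classical
  have key : ∀ x y : W, ERcode δ T η₀ hδη K e x = ERcode δ T η₀ hδη K e y →
      ∀ ν, ν < δ x → ν < δ y ∧ T x ν = T y ν := by
    intro x y hxy ν hν
    have h1 := ERcode_val δ T η₀ hδη K e x ν hν
    rw [hxy, ERcode] at h1
    split_ifs at h1 with h2
    have h1' := Option.some.inj h1
    have hfst : h2.choose.1 = ν := congrArg (fun z => z.1.1) h1'
    have hsnd := congrArg Prod.snd h1'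
    refine ⟨hfst ▸ h2.choose.2, ?_⟩
    simp only at hsnd
    rw [← hsnd, hfst]
  intro x y hxy
  have hδeq : δ x = δ y := by
    rcases lt_trichotomy (δ x) (δ y) with h | h | h
    · exact absurd ((key y x hxy.symm (δ x) h).1) (lt_irrefl _)
    · exact h
    · exact absurd ((key x y hxy (δ y) h).1) (lt_irrefl _)
  exact hdet x y hδeq (fun ν hν => (key x y hxy ν hν).2)

theorem trace_count {c : Cardinal.{u}} (hc : ℵ₀ ≤ c)
    (hP : #P ≤ c) (δ : W → O) (T : W → O → Option P) (η₀ : O)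
    (hδη : ∀ a, δ a < η₀) (hIio : ∀ a, #↥(Set.Iio (δ a)) ≤ c)
    (hη : #↥(Set.Iio η₀) ≤ Order.succ c)
    (hdet : ∀ a b, δ a = δ b → (∀ ν, ν < δ a → T a ν = T b ν) → a = b) :
    #W ≤ 2 ^ c := by
  classical
  have e : ∀ a : W, ↥(Set.Iio (δ a)) ↪ c.out := fun a =>
    Classical.choice ((Cardinal.le_def _ _).mp (by rw [Cardinal.mk_out]; exact hIio a))
  have h1 : #W ≤ #(c.out → Option (↥(Set.Iio η₀) × Option P)) :=
    Cardinal.mk_le_of_injective (ERcode_inj δ T η₀ hδη c.out e hdet)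
  have hD : ℵ₀ ≤ (2:Cardinal.{u}) ^ c := hc.trans (Cardinal.cantor c).le
  have hZ : #(Option (↥(Set.Iio η₀) × Option P)) ≤ 2 ^ c := by
    rw [Cardinal.mk_option, Cardinal.mk_prod, Cardinal.lift_id, Cardinal.lift_id,
      Cardinal.mk_option]
    have hX : #↥(Set.Iio η₀) ≤ 2 ^ c :=
      hη.trans (Order.succ_le_of_lt (Cardinal.cantor c))
    have hP1 : #P + 1 ≤ 2 ^ c := by
      have : #P + 1 ≤ (2 ^ c) + (2 ^ c) :=
        add_le_add (hP.trans (Cardinal.cantor c).le) (le_trans (by simp) hD)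
      rwa [Cardinal.add_eq_self hD] at this
    have : #↥(Set.Iio η₀) * (#P + 1) + 1 ≤ (2 ^ c) * (2 ^ c) + (2 ^ c) :=
      add_le_add (mul_le_mul' hX hP1) (le_trans (by simp) hD)
    rwa [Cardinal.mul_eq_self hD, Cardinal.add_eq_self hD] at this
  calc #W ≤ #(c.out → Option (↥(Set.Iio η₀) × Option P)) := h1
    _ = #(Option (↥(Set.Iio η₀) × Option P)) ^ c := by
        rw [← Cardinal.power_def, Cardinal.mk_out]
    _ ≤ (2 ^ c) ^ c := Cardinal.power_le_power_right hZ
    _ = 2 ^ (c * c) := by rw [← Cardinal.power_mul]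
    _ = 2 ^ c := by rw [Cardinal.mul_eq_self hc]

end count

theorem erdosRado [LinearOrder W] [WellFoundedLT W] (c : Cardinal.{u}) (hc : ℵ₀ ≤ c)
    (hP : #P ≤ c) (hW : Order.succ ((2 : Cardinal.{u}) ^ c) ≤ #W) (F : W → W → P)
    (lam : Cardinal.{u}) (hlam : lam ≤ c) :
    ∃ (p : P) (g : lam.ord.ToType → W), StrictMono g ∧ ∀ i j, i < j → F (g i) (g j) = p := by
  classical
  haveI := @isWellOrder_lt (Order.succ #W).ord.ToType _ _
  haveI := @isWellOrder_lt lam.ord.ToType _ _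
  set Fs : W → W → P := fun x y => if x ≤ y then F x y else F y x with hFs
  have hFs_lt : ∀ {x y : W}, x < y → Fs x y = F x y := fun {x y} h => if_pos h.le
  have hFs_symm : ∀ {x y : W}, x ≠ y → Fs x y = Fs y x := by
    intro x y h
    rcases lt_or_gt_of_ne h with h' | h'
    · show (if x ≤ y then F x y else F y x) = if y ≤ x then F y x else F x y
      rw [if_pos h'.le, if_neg (not_le.mpr h')]
    · show (if x ≤ y then F x y else F y x) = if y ≤ x then F y x else F x y
      rw [if_neg (not_le.mpr h'), if_pos h'.le]
  have hOcard : #(Order.succ #W).ord.ToType = Order.succ #W := by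
    rw [Cardinal.mk_toType, Cardinal.card_ord]
  -- existence of the stopping time
  have hBne : ∀ a : W, {ξ : (Order.succ #W).ord.ToType | ERseq Fs a ξ = some a}.Nonempty := by
    intro a
    rw [Set.nonempty_iff_ne_empty]
    intro hB
    have hB' : ∀ ξ : (Order.succ #W).ord.ToType, ERseq Fs a ξ ≠ some a := by
      intro ξ hξ
      exact absurd (hB ▸ hξ : ξ ∈ (∅ : Set _)) (Set.notMem_empty ξ)
    have hsome : ∀ ξ : (Order.succ #W).ord.ToType, ∃ w, ERseq Fs a ξ = some w := by
      intro ξ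
      apply ERseq_some
      rintro ⟨ν, hν, hw⟩
      exact hB' ν hw
    choose v hv using hsome
    have hvinj : Function.Injective v := by
      intro ν ξ h
      by_contra hne
      rcases lt_or_gt_of_ne hne with h' | h'
      · exact (ERseq_good (hv ξ)).1 ⟨ν, h', by rw [hv ν, h]⟩
      · exact (ERseq_good (hv ν)).1 ⟨ξ, h', by rw [hv ξ, ← h]⟩
    have hle : #(Order.succ #W).ord.ToType ≤ #W := Cardinal.mk_le_of_injective hvinj
    rw [hOcard] at hle
    exact absurd hle (not_le.mpr (Order.lt_succ _))
  set δ : W → (Order.succ #W).ord.ToType :=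
    fun a => WellFounded.min wellFounded_lt {ξ | ERseq Fs a ξ = some a} (hBne a) with hδdef
  have hδ : ∀ a, ERseq Fs a (δ a) = some a := fun a =>
    WellFounded.min_mem wellFounded_lt {ξ | ERseq Fs a ξ = some a} (hBne a)
  have hδmin : ∀ a (ν : (Order.succ #W).ord.ToType), ν < δ a → ERseq Fs a ν ≠ some a := by
    intro a ν hν h
    exact WellFounded.not_lt_min wellFounded_lt {ξ | ERseq Fs a ξ = some a} h hν
  have htotal : ∀ a (ν : (Order.succ #W).ord.ToType), ν < δ a → ∃ w, ERseq Fs a ν = some w := by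
    intro a ν hν
    apply ERseq_some
    rintro ⟨μ, hμ, hw⟩
    exact hδmin a μ (hμ.trans hν) hw
  -- the ordinal (succ c) inside O
  have hcW : c < #W :=
    lt_of_lt_of_le (Cardinal.cantor c) (le_trans (Order.le_succ _) hW)
  obtain ⟨η₀, hη₀⟩ : ∃ η₀ : (Order.succ #W).ord.ToType,
      @Ordinal.typein (Order.succ #W).ord.ToType (· < ·) isWellOrder_lt η₀
        = (Order.succ c).ord := by
    refine @Ordinal.typein_surj (Order.succ #W).ord.ToType (· < ·) isWellOrder_lt _ ?_
    rw [show @Ordinal.type (Order.succ #W).ord.ToType (· < ·) isWellOrder_lt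
          = (Order.succ #W).ord from Ordinal.type_toType _]
    exact Cardinal.ord_lt_ord.mpr (Order.succ_lt_succ hcW)
  have hIioη : #↥(Set.Iio η₀) = Order.succ c := by
    have h : #↥(Set.Iio η₀)
        = (@Ordinal.typein (Order.succ #W).ord.ToType (· < ·) isWellOrder_lt η₀).card :=
      @Ordinal.card_typein (Order.succ #W).ord.ToType (· < ·) isWellOrder_lt η₀
    rw [hη₀, Cardinal.card_ord] at h
    exact h
  -- some element has long trace
  obtain ⟨a, ha⟩ : ∃ a : W, η₀ ≤ δ a := by
    by_contra hAss
    push_neg at hAss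
    have hIio : ∀ a : W, #↥(Set.Iio (δ a)) ≤ c := by
      intro a
      have h1 : @Ordinal.typein (Order.succ #W).ord.ToType (· < ·) isWellOrder_lt (δ a)
          < (Order.succ c).ord := by
        rw [← hη₀]
        exact (@Ordinal.typein_lt_typein (Order.succ #W).ord.ToType (· < ·)
          isWellOrder_lt (δ a) η₀).mpr (hAss a)
      have h2 := Cardinal.lt_ord.mp h1
      have h3 : #↥(Set.Iio (δ a))
          = (@Ordinal.typein (Order.succ #W).ord.ToType (· < ·) isWellOrder_lt (δ a)).card :=
        @Ordinal.card_typein (Order.succ #W).ord.ToType (· < ·) isWellOrder_lt (δ a)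
      rw [← h3] at h2
      exact Order.lt_succ_iff.mp h2
    have hcount := trace_count hc hP δ
      (fun a ν => (ERseq Fs a ν).map (fun w => Fs w a)) η₀ hAss hIio (le_of_eq hIioη)
      (fun a b hab htr => ERseq_det (hδ a) (hab ▸ hδ b) htr)
    exact absurd hcount (not_le.mpr (lt_of_lt_of_le (Order.lt_succ _) hW))
  -- the end-homogeneous sequence
  have hx : ∀ ν : ↥(Set.Iio η₀), ∃ w, ERseq Fs a ν.1 = some w :=
    fun ν => htotal a ν.1 (lt_of_lt_of_le ν.2 ha)
  choose x hxv using hx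
  have hxagree : ∀ (ν ξ : ↥(Set.Iio η₀)), ν.1 < ξ.1 → Fs (x ν) (x ξ) = Fs (x ν) a :=
    fun ν ξ h => (ERseq_good (hxv ξ)).2 (x ν) ⟨ν.1, h, hxv ν⟩
  have hxinj : Function.Injective x := by
    intro ν ξ h
    by_contra hne
    have hne' : ν.1 ≠ ξ.1 := fun hh => hne (Subtype.ext hh)
    rcases lt_or_gt_of_ne hne' with h' | h'
    · exact (ERseq_good (hxv ξ)).1 ⟨ν.1, h', by rw [hxv ν, h]⟩
    · exact (ERseq_good (hxv ν)).1 ⟨ξ.1, h', by rw [hxv ξ, ← h]⟩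
  -- a large monochromatic fiber
  set G : ↥(Set.Iio η₀) → P := fun ν => Fs (x ν) a with hG
  obtain ⟨p, hp⟩ : ∃ p : P, lam ≤ #↥(G ⁻¹' {p}) := by
    by_contra hf
    push_neg at hf
    have h1 : #↥(Set.Iio η₀) ≤ c := by
      have he := Cardinal.mk_congr (Equiv.sigmaFiberEquiv G).symm
      have h2 : #(Σ p : P, ↥(G ⁻¹' {p})) ≤ c := by
        rw [Cardinal.mk_sigma]
        calc Cardinal.sum (fun p => #↥(G ⁻¹' {p}))
            ≤ Cardinal.sum (fun _ : P => c) :=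
              Cardinal.sum_le_sum _ _ (fun p => ((hf p).le.trans hlam))
          _ = #P * c := Cardinal.sum_const' P c
          _ ≤ c * c := mul_le_mul' hP le_rfl
          _ = c := Cardinal.mul_eq_self hc
      calc #↥(Set.Iio η₀) = #(Σ p : P, ↥(G ⁻¹' {p})) := he
        _ ≤ c := h2
    rw [hIioη] at h1
    exact absurd h1 (not_le.mpr (Order.lt_succ c))
  -- the homogeneous set, sorted by the order of W
  set H : Set W := x '' (G ⁻¹' {p}) with hH
  have hHcard : lam ≤ #↥H := by
    rw [hH, Cardinal.mk_image_eq hxinj]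
    exact hp
  have hHmono : ∀ u v : W, u ∈ H → v ∈ H → u < v → F u v = p := by
    rintro u v ⟨ν, hν, rfl⟩ ⟨ξ, hξ, rfl⟩ huv
    have hgν : Fs (x ν) a = p := hν
    have hgξ : Fs (x ξ) a = p := hξ
    have hne : ν.1 ≠ ξ.1 := by
      intro hh
      exact lt_irrefl _ (congrArg x (Subtype.ext hh) ▸ huv)
    rw [← hFs_lt huv]
    rcases lt_or_gt_of_ne hne with h' | h'
    · rw [hxagree ν ξ h']
      exact hgν
    · rw [hFs_symm (ne_of_lt huv), hxagree ξ ν h']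
      exact hgξ
  -- the increasing enumeration
  have hord : @Ordinal.type lam.ord.ToType (· < ·) isWellOrder_lt
      ≤ @Ordinal.type ↥H (· < ·) isWellOrder_lt := by
    rw [show @Ordinal.type lam.ord.ToType (· < ·) isWellOrder_lt = lam.ord
          from Ordinal.type_toType _]
    rw [Cardinal.ord_le]
    rw [show (@Ordinal.type ↥H (· < ·) isWellOrder_lt).card = #↥H
          from Ordinal.card_type _]
    exact hHcard
  obtain ⟨f⟩ := (@Ordinal.type_le_iff' lam.ord.ToType ↥H (· < ·) (· < ·)
    isWellOrder_lt isWellOrder_lt).mp hord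
  refine ⟨p, fun i => (f i : ↥H).1, ?_, ?_⟩
  · intro i j hij
    exact Subtype.coe_lt_coe.mpr (f.map_rel_iff.mpr hij)
  · intro i j hij
    exact hHmono _ _ (f i).2 (f j).2 (Subtype.coe_lt_coe.mpr (f.map_rel_iff.mpr hij))

end GMER

namespace GM

open Cardinal

variable {L : Lang.{u}} {Ω : Type u}

open Cardinal
variable {L : Lang.{u}} {Ω : Type u}

section GOPproofs

open Cardinal

variable {L : Lang.{u}} {Ω : Type u}

theorem GTriple.ext' {C : PreClass L Ω} {β : Type u} {A : Set Ω} {t₁ t₂ : GTriple C β A}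
    (hN : t₁.N = t₂.N) (hs : t₁.seq = t₂.seq) : t₁ = t₂ := by
  cases t₁; cases t₂; cases hN; cases hs; rfl

/-- Reindexing a Galois type along a map of index types. -/
def gtReindex (C : PreClass L Ω) {β γ : Type u} {A : Set Ω} (g : γ → β) :
    GType C β A → GType C γ A :=
  Quotient.map (fun t => ⟨t.N, t.hN, t.hA, t.seq ∘ g, fun i => t.hseq (g i)⟩)
    (fun t₁ t₂ he => by
      induction he with
      | rel x y hxy =>
        refine Relation.EqvGen.rel _ _ ?_
        obtain ⟨N, f₁, f₂, h₁, h₂, e₁, e₂, e⟩ := hxy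
        exact ⟨N, f₁, f₂, h₁, h₂, e₁, e₂, fun i => e (g i)⟩
      | refl x => exact Relation.EqvGen.refl _
      | symm x y _ ih => exact Relation.EqvGen.symm _ _ ih
      | trans x y z _ _ ih₁ ih₂ => exact Relation.EqvGen.trans _ _ _ ih₁ ih₂)

theorem gtpOf_congr {C : PreClass L Ω} {β : Type u} {N : Struc L Ω} {A : Set Ω}
    {b b' : β → Ω} {hN : N ∈ C.K} {hA : A ⊆ N.carrier} {hb : ∀ i, b i ∈ N.carrier}
    {hb' : ∀ i, b' i ∈ N.carrier} (h : b = b') :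
    gtpOf C N b A hN hA hb = gtpOf C N b' A hN hA hb' := by
  subst h; rfl

theorem gtReindex_inj {C : PreClass L Ω} {β γ : Type u} {A : Set Ω} (e : γ ≃ β) :
    Function.Injective (gtReindex C (⇑e) : GType C β A → GType C γ A) := by
  have key : ∀ r : GType C β A, gtReindex C (⇑e.symm) (gtReindex C (⇑e) r) = r := by
    intro r
    induction r using Quotient.inductionOn with
    | h t =>
      show Quotient.mk _ _ = Quotient.mk _ _
      exact congrArg _ (GTriple.ext' rfl (funext fun i => congrArg t.seq (e.apply_symm_apply i)))
  intro p q h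
  rw [← key p, h, key q]

/-- K-embeddings preserve quantifier-free formulas of the Morleyization. -/
theorem sat_emb (C : AbstractClass L Ω) (κ : Cardinal.{u}) {M N : Struc L Ω} {f : Ω → Ω}
    (h : IsEmb C.toPreClass M N f) {β : Type u} (b : β → Ω) (hb : ∀ i, b i ∈ M.carrier)
    (φ : QF (MorLang C.toPreClass κ) κ β) :
    QF.Sat (Mor C.toPreClass κ M) b φ ↔ QF.Sat (Mor C.toPreClass κ N) (f ∘ b) φ := by
  obtain ⟨hMK, hNK, M', iso, hle⟩ := h
  obtain ⟨hsub, hsubrel⟩ := C.le_sub hle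
  have hmap : ∀ w : Ω, w ∈ M.carrier → f w ∈ N.carrier := by
    intro w hw
    apply hsub
    rw [← iso.2.1]
    exact ⟨w, hw, rfl⟩
  induction φ with
  | equal x y =>
    exact ⟨fun hxy => congrArg f hxy, fun hxy => iso.1 (hb x) (hb y) hxy⟩
  | rel r v =>
    cases r with
    | inl r₀ =>
      show M.rel r₀ (b ∘ v) ↔ N.rel r₀ ((f ∘ b) ∘ v)
      rw [iso.2.2 r₀ (b ∘ v) (fun i => hb (v i))]
      exact hsubrel r₀ (f ∘ (b ∘ v)) (fun i => by rw [← iso.2.1]; exact ⟨b (v i), hb (v i), rfl⟩)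
    | inr x =>
      have hgt : gtpOf C.toPreClass M (b ∘ v) ∅ hMK (Set.empty_subset _)
            (fun i => hb (v i))
          = gtpOf C.toPreClass N (f ∘ (b ∘ v)) ∅ hNK (Set.empty_subset _)
            (fun i => hmap _ (hb (v i))) := by
        apply Quotient.sound
        apply Relation.EqvGen.rel
        exact ⟨N, f, id, ⟨hMK, hNK, M', iso, hle⟩,
          ⟨hNK, hNK, N, ⟨Set.injOn_id _, Set.image_id _, fun r w _ => Iff.rfl⟩,
            C.le_refl N hNK⟩,
          fun z hz => absurd hz (Set.notMem_empty z),
          fun z hz => absurd hz (Set.notMem_empty z), fun i => rfl⟩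
      constructor
      · rintro ⟨h1, h2, h3⟩
        exact ⟨hNK, fun i => hmap _ (hb (v i)), hgt.symm.trans h3⟩
      · rintro ⟨h1, h2, h3⟩
        exact ⟨hMK, fun i => hb (v i), hgt.trans h3⟩
  | not φ ih => exact not_congr ih
  | conj o φs ih => exact forall_congr' ih

/-- Equality of Galois types over the empty set implies equivalence of quantifier-free
formulas in the Morleyization. -/
theorem sat_gtp_eq (C : AbstractClass L Ω) (κ : Cardinal.{u}) {β : Type u}
    {t₁ t₂ : GTriple C.toPreClass β (∅ : Set Ω)}
    (h : Relation.EqvGen (Eat C.toPreClass) t₁ t₂) (φ : QF (MorLang C.toPreClass κ) κ β) :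
    (QF.Sat (Mor C.toPreClass κ t₁.N) t₁.seq φ ↔ QF.Sat (Mor C.toPreClass κ t₂.N) t₂.seq φ) := by
  induction h with
  | rel x y hxy =>
    obtain ⟨Nc, f₁, f₂, h₁, h₂, -, -, he⟩ := hxy
    rw [sat_emb C κ h₁ x.seq x.hseq φ, sat_emb C κ h₂ y.seq y.hseq φ,
      show f₁ ∘ x.seq = f₂ ∘ y.seq from funext he]
  | refl x => exact Iff.rfl
  | symm x y _ ih => exact ih.symm
  | trans x y z _ _ ih₁ ih₂ => exact ih₁.trans ih₂

/-- Part (1): the syntactic order property transfers to the Galois order property. -/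
theorem syn_to_galois (C : AbstractClass L Ω) (κ : Cardinal.{u}) (α : Cardinal.{u})
    {N : Struc L Ω} (hN : N ∈ C.toPreClass.K) (μ : Cardinal.{u})
    (h : SynOP κ (Mor C.toPreClass κ N) α μ) : GaloisOP C.toPreClass N hN α μ := by
  obtain ⟨a, φ, ha, hsat⟩ := h
  refine ⟨a, ha, ?_⟩
  intro i₀ j₀ i₁ j₁ h₀ h₁ heq
  have hE : Relation.EqvGen (Eat C.toPreClass)
      (⟨N, hN, Set.empty_subset _, Sum.elim (a i₀) (a j₀), elim_mem (ha i₀) (ha j₀)⟩ :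
        GTriple C.toPreClass _ _)
      ⟨N, hN, Set.empty_subset _, Sum.elim (a j₁) (a i₁), elim_mem (ha j₁) (ha i₁)⟩ :=
    Quotient.exact heq
  have hiff := sat_gtp_eq C κ hE φ
  rw [hsat i₀ j₀, hsat j₁ i₁] at hiff
  exact absurd (hiff.mp h₀) (lt_asymm h₁)

theorem exists_iio_equiv (κ : Cardinal.{u}) (γ : Type u) (hγ : #γ < κ) :
    ∃ o : κ.ord.ToType, Nonempty (↥(Set.Iio o) ≃ γ) := by
  obtain ⟨o, ho⟩ : ∃ o : κ.ord.ToType,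
      @Ordinal.typein κ.ord.ToType (· < ·) isWellOrder_lt o = (#γ).ord := by
    refine @Ordinal.typein_surj κ.ord.ToType (· < ·) isWellOrder_lt _ ?_
    rw [show @Ordinal.type κ.ord.ToType (· < ·) isWellOrder_lt = κ.ord
      from Ordinal.type_toType _]
    exact Cardinal.ord_lt_ord.mpr hγ
  refine ⟨o, ?_⟩
  have h : #↥(Set.Iio o) = (@Ordinal.typein κ.ord.ToType (· < ·) isWellOrder_lt o).card :=
    @Ordinal.card_typein κ.ord.ToType (· < ·) isWellOrder_lt o
  rw [ho, Cardinal.card_ord] at h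
  exact Cardinal.eq.mp h

/-- The set of Galois types of increasing pairs of a sequence. -/
def Pinc (C : PreClass L Ω) {α : Cardinal.{u}} {N : Struc L Ω} (hN : N ∈ C.K)
    {lam : Cardinal.{u}} (a : lam.ord.ToType → outType α → Ω)
    (ha : ∀ i k, a i k ∈ N.carrier) :
    Set (GType C (outType α ⊕ outType α) (∅ : Set Ω)) :=
  {q | ∃ i j, i < j ∧ q = gtpOf C N (Sum.elim (a i) (a j)) ∅ hN (Set.empty_subset _)
    (elim_mem (ha i) (ha j))}

/-- The core construction: a sequence with the Galois order property whose set of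
increasing-pair types is small gives the syntactic order property. -/
theorem main_syn (C : AbstractClass L Ω) (κ : Cardinal.{u}) (hκ : Cardinal.aleph0 ≤ κ)
    (α : Cardinal.{u}) (hα : α < κ) {N : Struc L Ω} (hN : N ∈ C.toPreClass.K)
    (lam : Cardinal.{u}) (a : lam.ord.ToType → outType α → Ω)
    (ha : ∀ i k, a i k ∈ N.carrier)
    (hop : ∀ i₀ j₀ i₁ j₁, i₀ < j₀ → i₁ < j₁ →
      gtpOf C.toPreClass N (Sum.elim (a i₀) (a j₀)) ∅ hN (Set.empty_subset _)
          (elim_mem (ha i₀) (ha j₀)) ≠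
        gtpOf C.toPreClass N (Sum.elim (a j₁) (a i₁)) ∅ hN (Set.empty_subset _)
          (elim_mem (ha j₁) (ha i₁)))
    (hsmall : #↥(Pinc C.toPreClass hN a ha) < κ) :
    SynOP κ (Mor C.toPreClass κ N) α lam := by
  classical
  have hβ : #(outType α ⊕ outType α) < κ := by
    have h1 : #(outType α ⊕ outType α) = α + α := by
      rw [Cardinal.mk_sum]
      rw [show #(outType α) = α from Cardinal.mk_out α]
      simp
    rw [h1]
    exact Cardinal.add_lt_of_lt hκ hα hα
  obtain ⟨o', ⟨e⟩⟩ := exists_iio_equiv κ (outType α ⊕ outType α) hβ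
  obtain ⟨o₂, ⟨e₂⟩⟩ := exists_iio_equiv κ ↥(Pinc C.toPreClass hN a ha) hsmall
  obtain ⟨o₃, ⟨e₃⟩⟩ := exists_iio_equiv κ (ULift.{u} Bool)
    (lt_of_lt_of_le (Cardinal.lt_aleph0_of_finite _) hκ)
  let atom : GType C.toPreClass (outType α ⊕ outType α) (∅ : Set Ω) →
      ((outType α ⊕ outType α) → (outType α ⊕ outType α)) →
      QF (MorLang C.toPreClass κ) κ (outType α ⊕ outType α) :=
    fun p w => QF.rel (Sum.inr ⟨o', gtReindex C.toPreClass (⇑e) p⟩) (fun m => w (e m))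
  let ψ : ((outType α ⊕ outType α) → (outType α ⊕ outType α)) →
      QF (MorLang C.toPreClass κ) κ (outType α ⊕ outType α) :=
    fun w => QF.not (QF.conj o₂ (fun k => QF.not (atom (e₂ k).1 w)))
  let swap : (outType α ⊕ outType α) → (outType α ⊕ outType α) := Sum.elim Sum.inr Sum.inl
  refine ⟨a, QF.conj o₃ (fun k => cond (e₃ k).down (ψ id) (QF.not (ψ swap))), ha, ?_⟩
  have hsat_atom : ∀ (p : GType C.toPreClass (outType α ⊕ outType α) (∅ : Set Ω))
      (w : (outType α ⊕ outType α) → (outType α ⊕ outType α)) (i j : lam.ord.ToType),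
      QF.Sat (Mor C.toPreClass κ N) (Sum.elim (a i) (a j)) (atom p w)
        ↔ gtpOf C.toPreClass N (Sum.elim (a i) (a j) ∘ w) ∅ hN (Set.empty_subset _)
            (fun m => elim_mem (ha i) (ha j) (w m)) = p := by
    intro p w i j
    constructor
    · rintro ⟨h1, h2, h3⟩
      have h4 : gtReindex C.toPreClass (⇑e)
            (gtpOf C.toPreClass N (Sum.elim (a i) (a j) ∘ w) ∅ hN (Set.empty_subset _)
              (fun m => elim_mem (ha i) (ha j) (w m)))
          = gtReindex C.toPreClass (⇑e) p := h3
      exact gtReindex_inj e h4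
    · intro h3
      exact ⟨hN, fun m => elim_mem (ha i) (ha j) (w (e m)),
        congrArg (gtReindex C.toPreClass (⇑e)) h3⟩
  have hsat_psi : ∀ (w : (outType α ⊕ outType α) → (outType α ⊕ outType α))
      (i j : lam.ord.ToType),
      QF.Sat (Mor C.toPreClass κ N) (Sum.elim (a i) (a j)) (ψ w)
        ↔ gtpOf C.toPreClass N (Sum.elim (a i) (a j) ∘ w) ∅ hN (Set.empty_subset _)
            (fun m => elim_mem (ha i) (ha j) (w m)) ∈ Pinc C.toPreClass hN a ha := by
    intro w i j
    show (¬ ∀ k, ¬ QF.Sat (Mor C.toPreClass κ N) (Sum.elim (a i) (a j)) (atom (e₂ k).1 w)) ↔ _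
    rw [not_forall]
    constructor
    · rintro ⟨k, hk⟩
      rw [not_not, hsat_atom] at hk
      rw [hk]
      exact (e₂ k).2
    · intro hmem
      obtain ⟨k, hk⟩ := e₂.surjective ⟨_, hmem⟩
      refine ⟨k, ?_⟩
      rw [not_not, hsat_atom, hk]
  have hswap : ∀ i j : lam.ord.ToType, Sum.elim (a i) (a j) ∘ swap = Sum.elim (a j) (a i) := by
    intro i j
    funext k
    cases k <;> rfl
  intro i j
  have hphi : QF.Sat (Mor C.toPreClass κ N) (Sum.elim (a i) (a j))
        (QF.conj o₃ (fun k => cond (e₃ k).down (ψ id) (QF.not (ψ swap))))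
      ↔ (gtpOf C.toPreClass N (Sum.elim (a i) (a j)) ∅ hN (Set.empty_subset _)
            (elim_mem (ha i) (ha j)) ∈ Pinc C.toPreClass hN a ha
          ∧ ¬ gtpOf C.toPreClass N (Sum.elim (a j) (a i)) ∅ hN (Set.empty_subset _)
            (elim_mem (ha j) (ha i)) ∈ Pinc C.toPreClass hN a ha) := by
    constructor
    · intro hk
      constructor
      · have h1 := hk (e₃.symm ⟨true⟩)
        simp only [Equiv.apply_symm_apply] at h1
        exact (hsat_psi id i j).mp h1
      · have h2 := hk (e₃.symm ⟨false⟩)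
        simp only [Equiv.apply_symm_apply] at h2
        have h2' : ¬ QF.Sat (Mor C.toPreClass κ N) (Sum.elim (a i) (a j)) (ψ swap) := h2
        rw [hsat_psi] at h2'
        rwa [gtpOf_congr (hb' := elim_mem (ha j) (ha i)) (hswap i j)] at h2'
    · rintro ⟨h1, h2⟩ k
      cases hb3 : (e₃ k).down with
      | true =>
        simp only [hb3]
        exact (hsat_psi id i j).mpr h1
      | false =>
        simp only [hb3]
        intro hcon
        have hcon' : QF.Sat (Mor C.toPreClass κ N) (Sum.elim (a i) (a j)) (ψ swap) := hcon
        rw [hsat_psi] at hcon'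
        rw [gtpOf_congr (hb' := elim_mem (ha j) (ha i)) (hswap i j)] at hcon'
        exact h2 hcon'
  rw [hphi]
  constructor
  · rintro ⟨h1, h2⟩
    rcases lt_trichotomy i j with h | h | h
    · exact h
    · subst h
      exact absurd h1 h2
    · obtain ⟨i', j', hij', heq⟩ := h1
      exact absurd heq.symm (hop i' j' j i hij' h)
  · intro hij
    refine ⟨⟨i, j, hij, rfl⟩, ?_⟩
    rintro ⟨i', j', hij', heq⟩
    exact hop i' j' i j hij' hij heq.symm

/-- Part (2): the Galois order property of sufficient length transfers to the
syntactic order property. -/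
theorem galois_to_syn (C : AbstractClass L Ω) (κ : Cardinal.{u}) (hκ : Cardinal.aleph0 ≤ κ)
    (α : Cardinal.{u}) (hα : α < κ) {N : Struc L Ω} (hN : N ∈ C.toPreClass.K)
    (lam μ : Cardinal.{u})
    (hμ : Order.succ ((2 : Cardinal.{u}) ^
        (lam + #(GType C.toPreClass (outType α ⊕ outType α) (∅ : Set Ω)))) ≤ μ)
    (hgal : GaloisOP C.toPreClass N hN α μ) : SynOP κ (Mor C.toPreClass κ N) α lam := by
  obtain ⟨a, ha, hop⟩ := hgal
  by_cases hχ : #(GType C.toPreClass (outType α ⊕ outType α) (∅ : Set Ω)) < κ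
  · -- few Galois types: restrict to an initial segment of length lam
    have hlamμ : lam.ord ≤ μ.ord := by
      apply Cardinal.ord_le_ord.mpr
      calc lam ≤ 2 ^ (lam + #(GType C.toPreClass (outType α ⊕ outType α) (∅ : Set Ω))) :=
            le_trans (self_le_add_right _ _) (Cardinal.cantor _).le
        _ ≤ μ := le_trans (Order.le_succ _) hμ
    let f := Ordinal.initialSegToType hlamμ
    refine main_syn C κ hκ α hα hN lam (fun i => a (f i)) (fun i k => ha (f i) k) ?_ ?_
    · intro i₀ j₀ i₁ j₁ h₀ h₁
      exact hop (f i₀) (f j₀) (f i₁) (f j₁) (f.map_rel_iff.mpr h₀) (f.map_rel_iff.mpr h₁)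
    · exact lt_of_le_of_lt (Cardinal.mk_set_le _) hχ
  · -- many Galois types: use the Erdős–Rado argument
    push_neg at hχ
    have hc : Cardinal.aleph0 ≤
        lam + #(GType C.toPreClass (outType α ⊕ outType α) (∅ : Set Ω)) :=
      le_trans hκ (le_trans hχ (self_le_add_left _ _))
    have hW : Order.succ ((2 : Cardinal.{u}) ^
        (lam + #(GType C.toPreClass (outType α ⊕ outType α) (∅ : Set Ω))))
        ≤ #μ.ord.ToType := by
      rw [Cardinal.mk_toType, Cardinal.card_ord]
      exact hμ
    obtain ⟨p, g, hg, hmono⟩ := GMER.erdosRado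
      (lam + #(GType C.toPreClass (outType α ⊕ outType α) (∅ : Set Ω))) hc
      (self_le_add_left _ _) hW
      (fun i j => gtpOf C.toPreClass N (Sum.elim (a i) (a j)) ∅ hN (Set.empty_subset _)
        (elim_mem (ha i) (ha j)))
      lam (self_le_add_right _ _)
    refine main_syn C κ hκ α hα hN lam (fun i => a (g i)) (fun i k => ha (g i) k) ?_ ?_
    · intro i₀ j₀ i₁ j₁ h₀ h₁
      exact hop (g i₀) (g j₀) (g i₁) (g j₁) (hg h₀) (hg h₁)
    · have hsub : Pinc C.toPreClass hN (fun i => a (g i)) (fun i k => ha (g i) k)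
          ⊆ {p} := by
        rintro q ⟨i, j, hij, rfl⟩
        exact hmono i j hij
      calc #↥(Pinc C.toPreClass hN (fun i => a (g i)) (fun i k => ha (g i) k))
          ≤ #↥({p} : Set _) := Cardinal.mk_le_mk_of_subset hsub
        _ = 1 := Cardinal.mk_singleton p
        _ < κ := lt_of_lt_of_le Cardinal.one_lt_aleph0 hκ

end GOPproofs

/-- Proposition 4.4. Let `K` be an abstract class, `κ` an infinite
cardinal, `K̂` its `(<κ)`-Galois Morleyization, `α < κ` a cardinal, and `N ∈ K`.
(1) If `N̂` has the syntactic `α`-order property of length `μ`, then `N` has the Galois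
`α`-order property of length `μ`. (2) With `χ := |gS^{α+α}(∅)|`, if `μ ≥ (2^{λ+χ})⁺`
and `N` has the Galois `α`-order property of length `μ`, then `N̂` has the syntactic
`α`-order property of length `λ`. In particular, `K` has the Galois `α`-order property
(of every length) iff `K̂` has the syntactic `α`-order property (of every length). -/
theorem galois_op_iff_syntactic_op {L : Lang.{u}} {Ω : Type u}
    (C : AbstractClass L Ω) (κ : Cardinal.{u}) (hκ : Cardinal.aleph0 ≤ κ)
    (α : Cardinal.{u}) (hα : α < κ) (N : Struc L Ω) (hN : N ∈ C.toPreClass.K) :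
    (∀ μ : Cardinal.{u},
        SynOP κ (Mor C.toPreClass κ N) α μ → GaloisOP C.toPreClass N hN α μ) ∧
    (∀ lam μ : Cardinal.{u},
        Order.succ ((2 : Cardinal.{u}) ^
            (lam + #(GType C.toPreClass (outType α ⊕ outType α) (∅ : Set Ω)))) ≤ μ →
        GaloisOP C.toPreClass N hN α μ → SynOP κ (Mor C.toPreClass κ N) α lam) ∧
    (GaloisOPAll C.toPreClass α ↔
      ∀ μ : Cardinal.{u}, ∃ N' ∈ C.toPreClass.K,
        SynOP κ (Mor C.toPreClass κ N') α μ) := by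
  refine ⟨fun μ h => syn_to_galois C κ α hN μ h,
    fun lam μ hμ h => galois_to_syn C κ hκ α hα hN lam μ hμ h, ?_, ?_⟩
  · intro hall μ
    obtain ⟨N', hN', hgal⟩ := hall (Order.succ ((2 : Cardinal.{u}) ^
      (μ + #(GType C.toPreClass (outType α ⊕ outType α) (∅ : Set Ω)))))
    exact ⟨N', hN', galois_to_syn C κ hκ α hα hN' μ _ le_rfl hgal⟩
  · intro h μ
    obtain ⟨N', hN', hsyn⟩ := h μ
    exact ⟨N', hN', syn_to_galois C κ α hN' μ hsyn⟩

end GM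
end
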